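/- arXiv:1708.05195 — 8 statements merged into one kernel-verified Lean document; each statement's English description precedes it below -/
import Mathlib

section
/- Let f be C¹ on an open neighborhood of C and strongly competitive, and suppose that for each j ∈ {1,…,n} an axial rest point x^(j) is given. Let I ⊆ {1,…,n} be such that its complement I' has at least two elements (equivalently |I| ≤ n−2). Then f_i(x^[I]) < 0 for every i ∈ I'; consequently F_i(x^[I]) := x^[I]_i · f_i(x^[I]) < 0 for every i ∈ I'. -/
/-- If `f` is `C¹` on an open neighborhood of the orthant `C` and strongly competitive, with
axial rest points `x^(j)`, and `I` is a set of indices whose complement has at least two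
elements, then `f_i(x^[I]) < 0` and hence `F_i(x^[I]) = x^[I]_i · f_i(x^[I]) < 0` for every
`i ∈ I'`.  Here `x^[I]` is the coordinatewise supremum of `{x^(j) : j ∈ I'}`. -/
theorem stmt2 {n : ℕ} (f : (Fin n → ℝ) → (Fin n → ℝ)) (U : Set (Fin n → ℝ))
    (hU : IsOpen U) (hCU : {x : Fin n → ℝ | ∀ k, 0 ≤ x k} ⊆ U)
    (hf : ContDiffOn ℝ 1 f U)
    (hcomp : ∀ x : Fin n → ℝ, (∀ k, 0 ≤ x k) → ∀ i j : Fin n, i ≠ j →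
      fderiv ℝ (fun y => f y i) x (Pi.single j 1) < 0)
    (xa : Fin n → (Fin n → ℝ))
    (hxaC : ∀ j k, 0 ≤ xa j k)
    (hxapos : ∀ j, 0 < xa j j)
    (hxazero : ∀ j k, k ≠ j → xa j k = 0)
    (hxarest : ∀ j, f (xa j) j = 0)
    (I : Finset (Fin n)) (hI : 2 ≤ Iᶜ.card)
    (xI : Fin n → ℝ) (hxI : xI = fun j => if j ∈ I then 0 else xa j j) :
    ∀ i ∉ I, f xI i < 0 ∧ xI i * f xI i < 0 := by
  intro i hi
  have hxIi : xI i = xa i i := by rw [hxI]; simp [hi]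
  have hxIC : ∀ k, 0 ≤ xI k := by
    intro k; rw [hxI]; dsimp only
    split
    · exact le_rfl
    · exact hxaC k k
  set a : Fin n → ℝ := xa i with ha
  have haC : ∀ k, 0 ≤ a k := hxaC i
  set v : Fin n → ℝ := fun k => xI k - a k with hv
  have hvi : v i = 0 := by simp [hv, hxIi]
  have hvnonneg : ∀ k, k ≠ i → 0 ≤ v k := by
    intro k hk
    have hak : a k = 0 := hxazero i k hk
    simp [hv, hak, hxIC k]
  -- pick j ∉ I, j ≠ i
  obtain ⟨j, hjmem, hji⟩ := Finset.exists_mem_ne (by omega : 1 < Iᶜ.card) i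
  have hjI : j ∉ I := Finset.mem_compl.mp hjmem
  have hvj : 0 < v j := by
    have : xI j = xa j j := by rw [hxI]; simp [hjI]
    simp [hv, this, ha, hxazero i j hji, hxapos j]
  set γ : ℝ → (Fin n → ℝ) := fun t => a + t • v with hγ
  have hγC : ∀ t ∈ Set.Icc (0:ℝ) 1, ∀ k, 0 ≤ γ t k := by
    intro t ht k
    have h1 := haC k
    have h2 := hxIC k
    have : γ t k = a k + t * (xI k - a k) := by simp [hγ, hv]
    rw [this]
    nlinarith [ht.1, ht.2]
  have hfi : ∀ x : Fin n → ℝ, (∀ k, 0 ≤ x k) →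
      DifferentiableAt ℝ (fun y => f y i) x := by
    intro x hx
    have hfd : DifferentiableAt ℝ f x :=
      (hf.differentiableOn one_ne_zero).differentiableAt (hU.mem_nhds (hCU hx))
    exact differentiableAt_pi.mp hfd i
  -- the directional derivative along v is negative on C
  have hDv : ∀ x : Fin n → ℝ, (∀ k, 0 ≤ x k) →
      fderiv ℝ (fun y => f y i) x v < 0 := by
    intro x hx
    have hvdecomp : v = ∑ k : Fin n, v k • (Pi.single k 1 : Fin n → ℝ) := by
      funext m
      simp [Pi.single_apply, Finset.sum_apply, mul_ite]
    have hlin : fderiv ℝ (fun y => f y i) x v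
        = ∑ k : Fin n, v k * fderiv ℝ (fun y => f y i) x (Pi.single k 1) := by
      conv_lhs => rw [hvdecomp]
      rw [map_sum]
      simp [smul_eq_mul]
    rw [hlin]
    have hlt : ∑ k : Fin n, v k * fderiv ℝ (fun y => f y i) x (Pi.single k 1)
        < ∑ _k : Fin n, (0:ℝ) := by
      apply Finset.sum_lt_sum
      · intro k _
        by_cases hk : k = i
        · subst hk; simp [hvi]
        · exact mul_nonpos_iff.mpr (Or.inl ⟨hvnonneg k hk, le_of_lt (hcomp x hx i k (Ne.symm hk))⟩)
      · exact ⟨j, Finset.mem_univ j, mul_neg_of_pos_of_neg hvj (hcomp x hx i j hji.symm)⟩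
    simpa using hlt
  have hγd : ∀ t : ℝ, HasDerivAt γ v t := by
    intro t
    have h := ((hasDerivAt_id t).smul_const v).const_add a
    simpa [hγ] using h
  have hgd : ∀ t : ℝ, (∀ k, 0 ≤ γ t k) →
      HasDerivAt (fun t => f (γ t) i) (fderiv ℝ (fun y => f y i) (γ t) v) t := by
    intro t ht
    exact ((hfi (γ t) ht).hasFDerivAt).comp_hasDerivAt t (hγd t)
  have hanti : StrictAntiOn (fun t => f (γ t) i) (Set.Icc (0:ℝ) 1) := by
    apply strictAntiOn_of_deriv_neg (convex_Icc 0 1)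
    · have hc : ContinuousOn (fun y => f y i) U :=
        (continuous_apply i).comp_continuousOn hf.continuousOn
      exact hc.comp (by fun_prop) (fun t ht => hCU (fun k => hγC t ht k))
    · intro t ht
      rw [interior_Icc] at ht
      have htC : ∀ k, 0 ≤ γ t k := hγC t ⟨le_of_lt ht.1, le_of_lt ht.2⟩
      rw [(hgd t htC).deriv]
      exact hDv (γ t) htC
  have h01 : f (γ 1) i < f (γ 0) i := by
    apply hanti (by norm_num) (by norm_num) zero_lt_one
  have hγ0 : γ 0 = a := by simp [hγ]
  have hγ1 : γ 1 = xI := by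
    funext k; simp [hγ, hv]
  rw [hγ0, hγ1, ha, hxarest i] at h01
  refine ⟨h01, mul_neg_of_pos_of_neg ?_ h01⟩
  rw [hxIi]; exact hxapos i
end

section
/- Let f be C¹ on an open neighborhood of C and strongly competitive, with axial rest points x^(1),…,x^(n), and let I ⊆ {1,…,n} have |I| ≤ n−2. If x : [0,T] → C (T > 0) is differentiable, satisfies x_k'(t) = x_k(t) f_k(x(t)) for all k and t, and x(0) = x^[I], then there exists δ > 0 such that for every t ∈ (0,δ) one has x_i(t) < x^[I]_i for all i ∈ I' (and x_j(t) = 0 for all j ∈ I); that is, the solution through x^[I] immediately enters the region strictly ≪_I-below x^[I]. -/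
/-- Let `f` be `C¹` on an open neighborhood of the orthant and strongly competitive, with axial
rest points `x^(1),…,x^(n)`, and let `|I| ≤ n - 2`.  If `x : [0,T] → C` solves
`x_k' = x_k f_k(x)` and `x(0) = x^[I]`, then there is `δ > 0` such that for all `t ∈ (0,δ)`
one has `x_i(t) < x^[I]_i` for all `i ∈ I'` and `x_j(t) = 0` for all `j ∈ I`:
the solution through `x^[I]` immediately enters the region strictly `≪_I`-below `x^[I]`. -/
theorem stmt3 {n : ℕ} (hn : 3 ≤ n) (f : (Fin n → ℝ) → (Fin n → ℝ)) (U : Set (Fin n → ℝ))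
    (hU : IsOpen U) (hCU : {x : Fin n → ℝ | ∀ k, 0 ≤ x k} ⊆ U)
    (hf : ContDiffOn ℝ 1 f U)
    (hcomp : ∀ x : Fin n → ℝ, (∀ k, 0 ≤ x k) → ∀ i j : Fin n, i ≠ j →
      fderiv ℝ (fun y => f y i) x (Pi.single j 1) < 0)
    (xa : Fin n → (Fin n → ℝ))
    (hxaC : ∀ j k, 0 ≤ xa j k)
    (hxapos : ∀ j, 0 < xa j j)
    (hxazero : ∀ j k, k ≠ j → xa j k = 0)
    (hxarest : ∀ j, f (xa j) j = 0)
    (I : Finset (Fin n)) (hI : I.card ≤ n - 2)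
    (xI : Fin n → ℝ) (hxI : xI = fun j => if j ∈ I then 0 else xa j j)
    (T : ℝ) (hT : 0 < T) (x : ℝ → (Fin n → ℝ))
    (hxC : ∀ t ∈ Set.Icc 0 T, ∀ k, 0 ≤ x t k)
    (hode : ∀ k : Fin n, ∀ t ∈ Set.Icc 0 T,
      HasDerivWithinAt (fun s => x s k) (x t k * f (x t) k) (Set.Icc 0 T) t)
    (hx0 : x 0 = xI) :
    ∃ δ : ℝ, 0 < δ ∧ δ ≤ T ∧ ∀ t : ℝ, 0 < t → t < δ →
      (∀ i ∉ I, x t i < xI i) ∧ (∀ j ∈ I, x t j = 0) := by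
  have hxIC : ∀ k, 0 ≤ xI k := by
    intro k; rw [hxI]; dsimp only
    split
    · exact le_rfl
    · exact hxaC k k
  -- continuity of the solution
  have hxcont : ∀ k : Fin n, ContinuousOn (fun t => x t k) (Set.Icc 0 T) := by
    intro k t ht; exact (hode k t ht).continuousWithinAt
  -- differentiability of components of f
  have hdiffAt : ∀ y ∈ U, DifferentiableAt ℝ f y := by
    intro y hy
    exact ((hf.differentiableOn one_ne_zero) y hy).differentiableAt (hU.mem_nhds hy)
  -- Step 1: coordinates in I stay zero on all of [0,T] (Gronwall)
  have hzero : ∀ j ∈ I, ∀ t ∈ Set.Icc 0 T, x t j = 0 := by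
    intro j hj
    have hmaps : ∀ t ∈ Set.Icc 0 T, x t ∈ U := fun t ht => hCU (hxC t ht)
    have hcontf : ContinuousOn (fun t => f (x t) j) (Set.Icc 0 T) := by
      have hx' : ContinuousOn x (Set.Icc 0 T) := continuousOn_pi.2 hxcont
      exact (continuous_apply j).comp_continuousOn
        ((hf.continuousOn).comp hx' hmaps)
    obtain ⟨K, hK⟩ := IsCompact.exists_bound_of_continuousOn isCompact_Icc hcontf
    have hgb := norm_le_gronwallBound_of_norm_deriv_right_le
      (f := fun t => x t j) (f' := fun t => x t j * f (x t) j)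
      (δ := 0) (K := K) (ε := 0) (a := 0) (b := T)
      (hxcont j)
      (by
        intro t ht
        refine (hode j t ⟨ht.1, ht.2.le⟩).mono_of_mem_nhdsWithin ?_
        rw [mem_nhdsWithin]
        exact ⟨Set.Iio T, isOpen_Iio, ht.2, fun s hs => ⟨le_trans ht.1 hs.2, hs.1.le⟩⟩)
      (by simp [hx0, hxI, hj])
      (by
        intro t ht
        have h1 : ‖f (x t) j‖ ≤ K := hK t ⟨ht.1, ht.2.le⟩
        calc ‖x t j * f (x t) j‖ = ‖x t j‖ * ‖f (x t) j‖ := norm_mul _ _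
          _ ≤ ‖x t j‖ * K := mul_le_mul_of_nonneg_left h1 (norm_nonneg _)
          _ = K * ‖x t j‖ + 0 := by ring)
    intro t ht
    have := hgb t ht
    rw [gronwallBound_ε0_δ0] at this
    have := norm_nonneg (x t j)
    have : ‖x t j‖ = 0 := le_antisymm (by linarith) (norm_nonneg _)
    simpa using this
  -- Step 2: f xI i < 0 for i ∉ I
  have hfneg : ∀ i ∉ I, f xI i < 0 := by
    intro i hi
    set v : Fin n → ℝ := fun k => xI k - xa i k with hv
    have hvi : v i = 0 := by simp [hv, hxI, hi]
    have hvnn : ∀ k, 0 ≤ v k := by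
      intro k
      rcases eq_or_ne k i with rfl | hk
      · rw [hvi]
      · simp only [hv, hxazero i k hk, sub_zero]; exact hxIC k
    set p : ℝ → (Fin n → ℝ) := fun s => xa i + s • v with hp
    have hpC : ∀ s ∈ Set.Icc (0:ℝ) 1, ∀ k, 0 ≤ p s k := by
      intro s hs k
      have : 0 ≤ s * v k := mul_nonneg hs.1 (hvnn k)
      simpa [hp] using add_nonneg (hxaC i k) this
    have hpU : ∀ s ∈ Set.Icc (0:ℝ) 1, p s ∈ U := fun s hs => hCU (hpC s hs)
    -- derivative of g := f ∘ p at coordinate i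
    have hgderiv : ∀ s ∈ Set.Icc (0:ℝ) 1,
        HasDerivAt (fun s => f (p s) i) (fderiv ℝ (fun z => f z i) (p s) v) s := by
      intro s hs
      have hpd : HasDerivAt p v s := by
        have h1 : HasDerivAt (fun s : ℝ => s • v) ((1:ℝ) • v) s :=
          (hasDerivAt_id s).smul_const v
        rw [one_smul] at h1
        simpa [hp] using h1.const_add (xa i)
      have hdi : DifferentiableAt ℝ (fun z => f z i) (p s) :=
        differentiableAt_pi.1 (hdiffAt (p s) (hpU s hs)) i
      exact hdi.hasFDerivAt.comp_hasDerivAt s hpd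
    -- the directional derivative is negative along the segment
    have hneg : ∀ s ∈ Set.Icc (0:ℝ) 1, fderiv ℝ (fun z => f z i) (p s) v < 0 := by
      intro s hs
      have hvsum : v = ∑ k, (v k) • (Pi.single k 1 : Fin n → ℝ) := by
        funext m
        rw [Finset.sum_apply]
        rcases Finset.mem_univ m with _
        have : ∀ k : Fin n, ((v k) • (Pi.single k 1 : Fin n → ℝ)) m = (Pi.single k (v k) : Fin n → ℝ) m := by
          intro k
          rcases eq_or_ne m k with rfl | hmk
          · simp
          · simp [Pi.single_eq_of_ne hmk]
        rw [Finset.sum_congr rfl (fun k _ => this k)]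
        have := congrFun (Finset.univ_sum_single v) m
        rw [Finset.sum_apply] at this
        exact this.symm
      have hmap : fderiv ℝ (fun z => f z i) (p s) v
          = ∑ k, (v k) * fderiv ℝ (fun z => f z i) (p s) (Pi.single k (1:ℝ)) := by
        conv_lhs => rw [hvsum]
        rw [map_sum]
        refine Finset.sum_congr rfl fun k _ => ?_
        rw [map_smul]; rfl
      rw [hmap]
      -- find a witness index
      have hcard : (insert i I).card < n := by
        have h1 := Finset.card_insert_le i I
        omega
      obtain ⟨k0, hk0⟩ : ∃ k0 : Fin n, k0 ∉ insert i I := by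
        by_contra h
        push_neg at h
        have : insert i I = Finset.univ := Finset.eq_univ_iff_forall.2 h
        rw [this, Finset.card_univ, Fintype.card_fin] at hcard
        omega
      have hk0i : k0 ≠ i := fun h => hk0 (by rw [h]; exact Finset.mem_insert_self i I)
      have hk0I : k0 ∉ I := fun h => hk0 (Finset.mem_insert_of_mem h)
      have hterm : ∀ k : Fin n,
          v k * fderiv ℝ (fun z => f z i) (p s) (Pi.single k (1:ℝ)) ≤ 0 := by
        intro k
        rcases eq_or_ne k i with rfl | hki
        · rw [hvi, zero_mul]
        · exact mul_nonpos_of_nonneg_of_nonpos (hvnn k)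
            (le_of_lt (hcomp (p s) (hpC s hs) i k (Ne.symm hki)))
      have hterm0 : v k0 * fderiv ℝ (fun z => f z i) (p s) (Pi.single k0 (1:ℝ)) < 0 := by
        have hvk0 : 0 < v k0 := by
          have : v k0 = xa k0 k0 := by
            simp [hv, hxI, hk0I, hxazero i k0 hk0i]
          rw [this]; exact hxapos k0
        exact mul_neg_of_pos_of_neg hvk0 (hcomp (p s) (hpC s hs) i k0 (Ne.symm hk0i))
      calc (∑ k, v k * fderiv ℝ (fun z => f z i) (p s) (Pi.single k (1:ℝ)))
          < ∑ _k : Fin n, (0:ℝ) :=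
            Finset.sum_lt_sum (fun k _ => hterm k) ⟨k0, Finset.mem_univ k0, hterm0⟩
        _ = 0 := by simp
    -- mean value theorem
    have hcont01 : ContinuousOn (fun s => f (p s) i) (Set.Icc 0 1) := by
      intro s hs
      exact ((hgderiv s hs).continuousAt).continuousWithinAt
    obtain ⟨c, hc, hceq⟩ := exists_hasDerivAt_eq_slope (fun s => f (p s) i)
      (fun s => fderiv ℝ (fun z => f z i) (p s) v) (by norm_num) hcont01
      (fun s hs => hgderiv s ⟨hs.1.le, hs.2.le⟩)
    have hp0 : p 0 = xa i := by simp [hp]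
    have hp1 : p 1 = xI := by
      funext k; simp [hp, hv]
    rw [hp0, hp1, hxarest i] at hceq
    have := hneg c ⟨hc.1.le, hc.2.le⟩
    rw [hceq] at this
    linarith [this]
  -- Step 3: right derivative at 0 is negative for i ∉ I; extract δ
  have hev : ∀ᶠ t in nhdsWithin 0 (Set.Icc 0 T \ {0}),
      ∀ i : Fin n, i ∉ I → x t i < xI i := by
    rw [Filter.eventually_all]
    intro i
    by_cases hi : i ∈ I
    · filter_upwards with t h; exact absurd hi h
    · have hd : x 0 i * f (x 0) i < 0 := by
        rw [hx0]
        refine mul_neg_of_pos_of_neg ?_ (hfneg i hi)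
        rw [hxI]; dsimp only; rw [if_neg hi]; exact hxapos i
      have hslope := (hasDerivWithinAt_iff_tendsto_slope).1 (hode i 0 ⟨le_rfl, hT.le⟩)
      have hsl : ∀ᶠ t in nhdsWithin 0 (Set.Icc 0 T \ {0}),
          slope (fun s => x s i) 0 t < 0 := hslope.eventually_lt_const hd
      filter_upwards [hsl, self_mem_nhdsWithin] with t hst hmem _
      have ht0 : 0 < t := lt_of_le_of_ne hmem.1.1 (Ne.symm hmem.2)
      rw [slope_def_field] at hst
      have : (x t i - x 0 i) / (t - 0) < 0 := by
        simpa [div_eq_inv_mul, mul_comm] using hst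
      rw [sub_zero] at this
      have h2 : x t i - x 0 i < 0 := by
        by_contra h
        push_neg at h
        have := div_nonneg h ht0.le
        linarith
      rw [hx0] at h2
      linarith
  obtain ⟨ε, hε, hsub⟩ := Metric.mem_nhdsWithin_iff.1 hev
  refine ⟨min ε T, lt_min hε hT, min_le_right _ _, fun t ht0 htδ => ?_⟩
  have htT : t ≤ T := le_of_lt (lt_of_lt_of_le htδ (min_le_right _ _))
  have htmem : t ∈ Metric.ball (0:ℝ) ε ∩ (Set.Icc 0 T \ {0}) := by
    constructor
    · rw [Metric.mem_ball, Real.dist_eq, sub_zero, abs_of_pos ht0]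
      exact lt_of_lt_of_le htδ (min_le_left _ _)
    · exact ⟨⟨ht0.le, htT⟩, ne_of_gt ht0⟩
  exact ⟨fun i hi => hsub htmem i hi, fun j hj => hzero j hj t ⟨ht0.le, htT⟩⟩
end

section
/- (Lemma 2 of the paper.) Let n ≥ 3, let f be C¹ on an open neighborhood of C and strongly competitive, with axial rest points x^(1),…,x^(n). Let Σ ⊆ C be a compact set such that: (i) Σ is forward invariant under solutions of (E), i.e. for every y ∈ Σ there exists T > 0 and a differentiable x : [0,T] → C with x(0) = y and x_k'(t) = x_k(t) f_k(x(t)) for all k, t, and every such solution starting in Σ stays in Σ; (ii) x^(k) ∈ Σ for every k; (iii) for every J ⊆ {1,…,n} no two distinct points of Σ ∩ C_J are related by ≪_J. Then for every I ⊆ {1,…,n} with 1 ≤ |I| ≤ n−2, every y ∈ Σ ∩ C_I satisfies y <_I x^[I]. -/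
open Set Filter

lemma aux_fdecr {n : ℕ} (f : (Fin n → ℝ) → (Fin n → ℝ)) (U : Set (Fin n → ℝ))
    (hU : IsOpen U) (hCU : {x : Fin n → ℝ | ∀ k, 0 ≤ x k} ⊆ U)
    (hf : ContDiffOn ℝ 1 f U)
    (hcomp : ∀ x : Fin n → ℝ, (∀ k, 0 ≤ x k) → ∀ i j : Fin n, i ≠ j →
      fderiv ℝ (fun y => f y i) x (Pi.single j 1) < 0)
    (j l : Fin n) (hl : l ≠ j) (p q : Fin n → ℝ)
    (hp : ∀ k, 0 ≤ p k) (hpq : ∀ k, p k ≤ q k) (hj : p j = q j) (hpl : p l < q l) :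
    f q j < f p j := by
  set w : ℝ → (Fin n → ℝ) := fun s => p + s • (q - p) with hw
  have hwC : ∀ s ∈ Icc (0:ℝ) 1, ∀ k, 0 ≤ w s k := by
    intro s hs k
    have h1 : w s k = p k + s * (q k - p k) := by simp [hw]
    rw [h1]
    have h2 := mul_nonneg hs.1 (sub_nonneg.2 (hpq k))
    linarith [hp k]
  have hwU : ∀ s ∈ Icc (0:ℝ) 1, w s ∈ U := fun s hs => hCU (hwC s hs)
  have hdw : ∀ s : ℝ, HasDerivAt w (q - p) s := by
    intro s
    have h1 : HasDerivAt (fun s : ℝ => s • (q - p)) ((1:ℝ) • (q - p)) s :=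
      (hasDerivAt_id s).smul_const (q - p)
    simpa [hw] using h1.const_add p
  have hdF : ∀ s ∈ Icc (0:ℝ) 1,
      HasDerivAt (fun s => f (w s) j) (fderiv ℝ (fun z => f z j) (w s) (q - p)) s := by
    intro s hs
    have hdf : DifferentiableAt ℝ f (w s) :=
      (hf.differentiableOn one_ne_zero).differentiableAt (hU.mem_nhds (hwU s hs))
    have hdfj : DifferentiableAt ℝ (fun z => f z j) (w s) := differentiableAt_pi.1 hdf j
    exact hdfj.hasFDerivAt.comp_hasDerivAt s (hdw s)
  have hDneg : ∀ x : Fin n → ℝ, (∀ k, 0 ≤ x k) →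
      fderiv ℝ (fun z => f z j) x (q - p) < 0 := by
    intro x hx
    have hv : (q - p) = ∑ k : Fin n, (q k - p k) • (Pi.single k (1:ℝ) : Fin n → ℝ) := by
      funext m
      rw [Finset.sum_apply]
      simp [Pi.single_apply, Finset.sum_ite_eq]
    set D := fderiv ℝ (fun z => f z j) x with hD
    have hDs : D (q - p) = ∑ k : Fin n, (q k - p k) * D (Pi.single k 1) := by
      rw [hv, map_sum]
      exact Finset.sum_congr rfl fun k _ => by simp
    rw [hDs]
    have hterm : ∀ k ∈ Finset.univ.erase l, (q k - p k) * D (Pi.single k 1) ≤ 0 := by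
      intro k _
      by_cases hkj : k = j
      · subst hkj; rw [hj]; simp
      · exact mul_nonpos_of_nonneg_of_nonpos (sub_nonneg.2 (hpq k))
          (hcomp x hx j k (Ne.symm hkj)).le
    have hlterm : (q l - p l) * D (Pi.single l 1) < 0 :=
      mul_neg_of_pos_of_neg (sub_pos.2 hpl) (hcomp x hx j l (Ne.symm hl))
    have hsum := Finset.add_sum_erase Finset.univ
      (fun k => (q k - p k) * D (Pi.single k 1)) (Finset.mem_univ l)
    have hrest : ∑ k ∈ Finset.univ.erase l, (q k - p k) * D (Pi.single k 1) ≤ 0 :=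
      Finset.sum_nonpos hterm
    beta_reduce at hsum
    linarith [hsum, hlterm, hrest]
  have cont : ContinuousOn (fun s => f (w s) j) (Icc 0 1) :=
    fun s hs => (hdF s hs).continuousAt.continuousWithinAt
  have anti : StrictAntiOn (fun s => f (w s) j) (Icc 0 1) := by
    apply strictAntiOn_of_deriv_neg (convex_Icc 0 1) cont
    intro s hs
    rw [interior_Icc] at hs
    rw [(hdF s (Ioo_subset_Icc_self hs)).deriv]
    exact hDneg _ (hwC s (Ioo_subset_Icc_self hs))
  have h01 := anti (left_mem_Icc.2 zero_le_one) (right_mem_Icc.2 zero_le_one) zero_lt_one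
  have hw0 : w 0 = p := by funext k; simp [hw]
  have hw1 : w 1 = q := by funext k; simp [hw]
  simp only [hw0, hw1] at h01
  exact h01

lemma aux_zero (T : ℝ) (hT : 0 < T) (φ : ℝ → ℝ) (c : ℝ → ℝ)
    (hc : ContinuousOn c (Icc 0 T))
    (hd : ∀ t ∈ Icc 0 T, HasDerivWithinAt φ (φ t * c t) (Icc 0 T) t)
    (h0 : φ 0 = 0) : ∀ t ∈ Icc 0 T, φ t = 0 := by
  obtain ⟨M, hM⟩ := isCompact_Icc.exists_bound_of_continuousOn hc
  have hM0 : 0 ≤ M := le_trans (norm_nonneg (c 0)) (hM 0 ⟨le_rfl, hT.le⟩)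
  have hcont : ContinuousOn φ (Icc 0 T) := fun t ht => (hd t ht).continuousWithinAt
  have hd' : ∀ t ∈ Ico 0 T, HasDerivWithinAt φ ((fun s => φ s * c s) t) (Ici t) t := by
    intro t ht
    apply (hd t (Ico_subset_Icc_self ht)).mono_of_mem_nhdsWithin
    have h1 : Ici t ∩ Iic T ∈ nhdsWithin t (Ici t) :=
      inter_mem_nhdsWithin _ (Iic_mem_nhds ht.2)
    apply Filter.mem_of_superset h1
    rintro z ⟨hz1, hz2⟩
    exact ⟨le_trans ht.1 hz1, hz2⟩
  have hb : ∀ t ∈ Ico 0 T, ‖(fun s => φ s * c s) t‖ ≤ M * ‖φ t‖ + 0 := by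
    intro t ht
    simp only [add_zero, norm_mul]
    rw [mul_comm]
    exact mul_le_mul (hM t (Ico_subset_Icc_self ht)) le_rfl (norm_nonneg _) hM0
  have h0' : ‖φ 0‖ ≤ 0 := by rw [h0]; simp
  have hg := norm_le_gronwallBound_of_norm_deriv_right_le hcont hd' h0' hb
  intro t ht
  have h2 := hg t ht
  rw [gronwallBound_ε0] at h2
  simp only [zero_mul] at h2
  exact norm_le_zero_iff.1 h2

/-- Lemma 2 of the paper.  Let `n ≥ 3`, `f` strongly competitive and `C¹` near the orthant,
with axial rest points `x^(k)`.  Let `S ⊆ C` be compact, forward invariant under solutions of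
`ẋ_k = x_k f_k(x)` (with solutions through each of its points), containing all the axial rest
points, and such that for every `J` no two distinct points of `S ∩ C_J` are related by `≪_J`.
Then for every `I` with `1 ≤ |I| ≤ n - 2`, every `y ∈ S ∩ C_I` satisfies `y <_I x^[I]`. -/
theorem stmt4 {n : ℕ} (hn : 3 ≤ n) (f : (Fin n → ℝ) → (Fin n → ℝ)) (U : Set (Fin n → ℝ))
    (hU : IsOpen U) (hCU : {x : Fin n → ℝ | ∀ k, 0 ≤ x k} ⊆ U)
    (hf : ContDiffOn ℝ 1 f U)
    (hcomp : ∀ x : Fin n → ℝ, (∀ k, 0 ≤ x k) → ∀ i j : Fin n, i ≠ j →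
      fderiv ℝ (fun y => f y i) x (Pi.single j 1) < 0)
    (xa : Fin n → (Fin n → ℝ))
    (hxaC : ∀ j k, 0 ≤ xa j k)
    (hxapos : ∀ j, 0 < xa j j)
    (hxazero : ∀ j k, k ≠ j → xa j k = 0)
    (hxarest : ∀ j, f (xa j) j = 0)
    (S : Set (Fin n → ℝ)) (hSC : S ⊆ {x : Fin n → ℝ | ∀ k, 0 ≤ x k})
    (hScomp : IsCompact S)
    -- (i) through every point of `S` there is a forward solution of (E) staying in `C` …
    (hexist : ∀ y ∈ S, ∃ T : ℝ, 0 < T ∧ ∃ x : ℝ → (Fin n → ℝ), x 0 = y ∧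
      (∀ t ∈ Set.Icc 0 T, ∀ k, 0 ≤ x t k) ∧
      (∀ k : Fin n, ∀ t ∈ Set.Icc 0 T,
        HasDerivWithinAt (fun s => x s k) (x t k * f (x t) k) (Set.Icc 0 T) t))
    -- … and every solution of (E) starting in `S` stays in `S`
    (hinv : ∀ T : ℝ, 0 < T → ∀ x : ℝ → (Fin n → ℝ), x 0 ∈ S →
      (∀ t ∈ Set.Icc 0 T, ∀ k, 0 ≤ x t k) →
      (∀ k : Fin n, ∀ t ∈ Set.Icc 0 T,
        HasDerivWithinAt (fun s => x s k) (x t k * f (x t) k) (Set.Icc 0 T) t) →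
      ∀ t ∈ Set.Icc 0 T, x t ∈ S)
    -- (ii) all axial rest points belong to `S`
    (haxial : ∀ k, xa k ∈ S)
    -- (iii) no two distinct points of `S ∩ C_J` are related by `≪_J`
    (hunord : ∀ J : Finset (Fin n), ∀ y ∈ S, ∀ z ∈ S, y ≠ z →
      (∀ j ∈ J, y j = 0) → (∀ j ∈ J, z j = 0) → ¬ (∀ j ∉ J, y j < z j)) :
    ∀ I : Finset (Fin n), 1 ≤ I.card → I.card ≤ n - 2 →
      ∀ y ∈ S, (∀ i ∈ I, y i = 0) →
        (∀ j ∉ I, y j ≤ (if j ∈ I then 0 else xa j j)) ∧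
          y ≠ (fun j => if j ∈ I then 0 else xa j j) := by
  classical
  have hbound : ∀ y ∈ S, ∀ j : Fin n, y j ≤ xa j j := by
    intro y hyS j
    by_contra hgt
    push_neg at hgt
    have hyj : 0 < y j := lt_trans (hxapos j) hgt
    set J : Finset (Fin n) := Finset.univ.filter (fun k => y k = 0) with hJ
    refine hunord J (xa j) (haxial j) y hyS ?_ ?_ ?_ ?_
    · intro heq
      rw [← heq] at hgt
      exact lt_irrefl _ hgt
    · intro k hk
      have hyk : y k = 0 := by simpa [hJ] using hk
      have hkj : k ≠ j := by rintro rfl; rw [hyk] at hyj; exact lt_irrefl _ hyj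
      exact hxazero j k hkj
    · intro k hk; simpa [hJ] using hk
    · intro k hk
      have hyk : y k ≠ 0 := by simpa [hJ] using hk
      have hykpos : 0 < y k := lt_of_le_of_ne (hSC hyS k) (Ne.symm hyk)
      by_cases hkj : k = j
      · subst hkj; exact hgt
      · rw [hxazero j k hkj]; exact hykpos
  intro I hI1 hI2 y hyS hyI
  have hcard : 1 < (Iᶜ : Finset (Fin n)).card := by
    rw [Finset.card_compl, Fintype.card_fin]
    omega
  constructor
  · intro j hj
    rw [if_neg hj]
    exact hbound y hyS j
  · intro heq
    have hyv : ∀ k, y k = if k ∈ I then 0 else xa k k := fun k => congrFun heq k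
    have hfy : ∀ j, j ∉ I → f y j < 0 := by
      intro j hjI
      obtain ⟨a, ha, b, hb, hab⟩ := Finset.one_lt_card.1 hcard
      have hm : ∃ m, m ∉ I ∧ m ≠ j := by
        by_cases hja : a = j
        · exact ⟨b, by simpa using hb, by rw [← hja]; exact (Ne.symm hab)⟩
        · exact ⟨a, by simpa using ha, hja⟩
      obtain ⟨m, hmI, hmj⟩ := hm
      have h := aux_fdecr f U hU hCU hf hcomp j m hmj (xa j) y (hxaC j) ?_ ?_ ?_
      · rw [hxarest j] at h; exact h
      · intro k
        by_cases hkj : k = j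
        · subst hkj; rw [hyv k, if_neg hjI]
        · rw [hxazero j k hkj]; exact hSC hyS k
      · rw [hyv j, if_neg hjI]
      · rw [hxazero j m hmj, hyv m, if_neg hmI]; exact hxapos m
    obtain ⟨T, hT, x, hx0, hxC, hxd⟩ := hexist y hyS
    have hxcont : ContinuousOn x (Icc 0 T) := by
      apply continuousOn_pi.2
      intro i t ht
      exact (hxd i t ht).continuousWithinAt
    have hxzero : ∀ k ∈ I, ∀ t ∈ Icc (0:ℝ) T, x t k = 0 := by
      intro k hk
      apply aux_zero T hT (fun t => x t k) (fun t => f (x t) k) ?_ (hxd k) ?_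
      · have hmap : MapsTo x (Icc 0 T) U := fun t ht => hCU (hxC t ht)
        have hc1 : ContinuousOn (fun t => f (x t)) (Icc 0 T) :=
          hf.continuousOn.comp hxcont hmap
        exact (continuous_apply k).comp_continuousOn hc1
      · show x 0 k = 0
        rw [hx0]; exact hyI k hk
    have hL : (nhdsWithin (0:ℝ) (Icc 0 T \ {0})).NeBot := by
      have hsub : Ioc (0:ℝ) T ⊆ Icc 0 T \ {0} := by
        rintro t ⟨h1, h2⟩
        exact ⟨⟨h1.le, h2⟩, ne_of_gt h1⟩
      have h0c : (0:ℝ) ∈ closure (Ioc (0:ℝ) T) := by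
        rw [closure_Ioc hT.ne]
        exact ⟨le_rfl, hT.le⟩
      exact (mem_closure_iff_nhdsWithin_neBot.1 h0c).mono (nhdsWithin_mono _ hsub)
    have hslope : ∀ᶠ t in nhdsWithin (0:ℝ) (Icc 0 T \ {0}),
        ∀ j : Fin n, j ∉ I → slope (fun s => x s j) 0 t < 0 := by
      rw [eventually_all]
      intro j
      by_cases hjI' : j ∉ I
      · have hd0 := hxd j 0 (left_mem_Icc.2 hT.le)
        have htend := hasDerivWithinAt_iff_tendsto_slope.1 hd0
        have hneg : x 0 j * f (x 0) j < 0 := by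
          rw [hx0]
          have hyj : y j = xa j j := by rw [hyv j, if_neg hjI']
          exact mul_neg_of_pos_of_neg (by rw [hyj]; exact hxapos j) (hfy j hjI')
        filter_upwards [Filter.Tendsto.eventually_lt_const hneg htend] with t ht
        intro _
        exact ht
      · filter_upwards with t h
        exact absurd h hjI'
    obtain ⟨t, hts, htmem⟩ := (hslope.and eventually_mem_nhdsWithin).exists
    obtain ⟨htIcc, htne⟩ := htmem
    have htne' : t ≠ 0 := by simpa using htne
    have htpos : 0 < t := lt_of_le_of_ne htIcc.1 (Ne.symm htne')
    have hxtS : x t ∈ S := hinv T hT x (by rw [hx0]; exact hyS) hxC hxd t htIcc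
    have hlt : ∀ j, j ∉ I → x t j < y j := by
      intro j hjI'
      have hs := hts j hjI'
      rw [slope_def_field] at hs
      have h3 : x t j - x 0 j < 0 := by
        by_contra hge
        push_neg at hge
        have : 0 ≤ (x t j - x 0 j) / (t - 0) := div_nonneg hge (by linarith)
        linarith
      rw [hx0] at h3
      linarith
    obtain ⟨j0, hj0, _, _, _⟩ := Finset.one_lt_card.1 hcard
    have hj0I : j0 ∉ I := by simpa using hj0
    refine hunord I (x t) hxtS y hyS ?_ ?_ hyI hlt
    · intro hEq
      have h4 := hlt j0 hj0I
      rw [hEq] at h4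
      exact lt_irrefl _ h4
    · intro k hk
      exact hxzero k hk t htIcc
end

section
/- Let f be C¹ on an open neighborhood of C and strongly competitive, with axial rest points x^(1),…,x^(n). Then the following two conditions are equivalent: (a) for each i ∈ {1,…,n}, f_i(x^[{i}]) ≥ 0; (b) for every I ⊆ {1,…,n} with 1 ≤ |I| ≤ n−1 and every i ∈ I, f_i(x^[I]) ≥ 0. (Thus hypothesis (A) admits the stated equivalent formulation.) -/
/-- For a strongly competitive system with axial rest points `x^(j)`, hypothesis (A)
(`f_i(x^[{i}]) ≥ 0` for every `i`) is equivalent to the formulation: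
for every `I` with `1 ≤ |I| ≤ n - 1` and every `i ∈ I`, `f_i(x^[I]) ≥ 0`. -/
theorem stmt5 {n : ℕ} (hn : 3 ≤ n) (f : (Fin n → ℝ) → (Fin n → ℝ)) (U : Set (Fin n → ℝ))
    (hU : IsOpen U) (hCU : {x : Fin n → ℝ | ∀ k, 0 ≤ x k} ⊆ U)
    (hf : ContDiffOn ℝ 1 f U)
    (hcomp : ∀ x : Fin n → ℝ, (∀ k, 0 ≤ x k) → ∀ i j : Fin n, i ≠ j →
      fderiv ℝ (fun y => f y i) x (Pi.single j 1) < 0)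
    (xa : Fin n → (Fin n → ℝ))
    (hxaC : ∀ j k, 0 ≤ xa j k)
    (hxapos : ∀ j, 0 < xa j j)
    (hxazero : ∀ j k, k ≠ j → xa j k = 0)
    (hxarest : ∀ j, f (xa j) j = 0) :
    (∀ i : Fin n, 0 ≤ f (fun j => if j = i then 0 else xa j j) i) ↔
      (∀ I : Finset (Fin n), 1 ≤ I.card → I.card ≤ n - 1 → ∀ i ∈ I,
        0 ≤ f (fun j => if j ∈ I then 0 else xa j j) i) := by
  constructor
  · intro hA I hc1 hc2 i hiI
    set a : Fin n → ℝ := fun j => if j ∈ I then 0 else xa j j with ha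
    set b : Fin n → ℝ := fun j => if j = i then 0 else xa j j with hb
    have haC : ∀ k, 0 ≤ a k := by
      intro k; simp only [ha]
      split
      · exact le_refl 0
      · exact hxaC k k
    have hbsub : ∀ k, 0 ≤ b k - a k := by
      intro k; simp only [ha, hb]
      by_cases hk : k = i
      · subst hk; simp [hiI]
      · by_cases hkI : k ∈ I
        · simp [hk, hkI]; exact (hxaC k k)
        · have : k ≠ i := hk
          simp [hk, hkI]
    have hbi : b i - a i = 0 := by simp [ha, hb, hiI]
    -- the path
    set γ : ℝ → (Fin n → ℝ) := fun t => a + t • (b - a) with hγ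
    have hγC : ∀ t : ℝ, 0 ≤ t → ∀ k, 0 ≤ γ t k := by
      intro t ht k
      have : γ t k = a k + t * (b k - a k) := by simp [hγ]
      rw [this]
      have := mul_nonneg ht (hbsub k)
      linarith [haC k]
    -- derivative of f_i along the path is ≤ 0 on C
    have hdiffat : ∀ x : Fin n → ℝ, (∀ k, 0 ≤ x k) →
        DifferentiableAt ℝ (fun y => f y i) x := by
      intro x hx
      have hxU : x ∈ U := hCU hx
      have : DifferentiableAt ℝ f x :=
        ((hf.differentiableOn one_ne_zero) x hxU).differentiableAt (hU.mem_nhds hxU)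
      exact (differentiableAt_pi.mp this) i
    have hkey : ∀ x : Fin n → ℝ, (∀ k, 0 ≤ x k) →
        fderiv ℝ (fun y => f y i) x (b - a) ≤ 0 := by
      intro x hx
      set L := fderiv ℝ (fun y => f y i) x with hL
      have hv : (b - a) = ∑ j : Fin n, (b j - a j) • (Pi.single j 1 : Fin n → ℝ) := by
        funext k
        simp [Pi.single_apply, Finset.sum_ite_eq', mul_comm]
      rw [hv, map_sum]
      apply Finset.sum_nonpos
      intro j _
      rw [L.map_smul]
      by_cases hj : j = i
      · subst hj; rw [hbi]; simp
      · have h1 := hcomp x hx i j (Ne.symm hj)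
        have h2 := hbsub j
        have : L (Pi.single j 1) < 0 := h1
        simp only [smul_eq_mul]
        exact mul_nonpos_of_nonneg_of_nonpos h2 (le_of_lt this)
    -- g t = f (γ t) i
    set g : ℝ → ℝ := fun t => f (γ t) i with hg
    have hpath : ∀ t : ℝ, HasDerivAt γ (b - a) t := by
      intro t
      have h1 : HasDerivAt (fun s : ℝ => s • (b - a)) (b - a) t := by
        simpa using (hasDerivAt_id t).smul_const (b - a)
      simpa [hγ] using h1.const_add a
    have hgderiv : ∀ t : ℝ, 0 ≤ t →
        HasDerivAt g (fderiv ℝ (fun y => f y i) (γ t) (b - a)) t := by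
      intro t ht
      have hd := hdiffat (γ t) (hγC t ht)
      exact hd.hasFDerivAt.comp_hasDerivAt t (hpath t)
    have hanti : AntitoneOn g (Set.Icc 0 1) := by
      apply antitoneOn_of_deriv_nonpos (convex_Icc (0:ℝ) 1)
      · intro t htm
        exact ((hgderiv t htm.1).continuousAt).continuousWithinAt
      · intro t htm
        rw [interior_Icc] at htm
        exact ((hgderiv t (le_of_lt htm.1)).differentiableAt).differentiableWithinAt
      · intro t htm
        rw [interior_Icc] at htm
        rw [(hgderiv t (le_of_lt htm.1)).deriv]
        exact hkey (γ t) (hγC t (le_of_lt htm.1))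
    have h01 : g 1 ≤ g 0 := hanti (Set.mem_Icc.mpr ⟨le_refl 0, zero_le_one⟩)
      (Set.mem_Icc.mpr ⟨zero_le_one, le_refl 1⟩) zero_le_one
    have hg0 : g 0 = f a i := by simp [hg, hγ]
    have hg1 : g 1 = f b i := by simp [hg, hγ]
    have := hA i
    rw [← hb] at this
    calc (0:ℝ) ≤ f b i := this
    _ = g 1 := hg1.symm
    _ ≤ g 0 := h01
    _ = f a i := hg0
  · intro hB i
    have h1 : (1:ℕ) ≤ ({i} : Finset (Fin n)).card := by simp
    have h2 : ({i} : Finset (Fin n)).card ≤ n - 1 := by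
      rw [Finset.card_singleton]; omega
    have := hB {i} h1 h2 i (Finset.mem_singleton_self i)
    simpa using this
end

section
/- Let T ∈ ℝ, ε > 0, m > 0, and let g : [T,∞) → ℝ be differentiable with g(t) ≥ 0 for all t, g(T) > 0, and g'(t) ≥ m·g(t) for every t ≥ T at which g(t) < ε. Then there exists T' ≥ T such that g(t) ≥ ε for all t ≥ T'; in particular liminf_{t→∞} g(t) ≥ ε. -/
open Set Filter

/-- Persistence estimate: if `g : [T,∞) → ℝ` is differentiable, nonnegative, positive at `T`,
and satisfies `g' ≥ m·g` (with `m > 0`) at every time where `g < ε`, then from some time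
`T' ≥ T` onwards `g ≥ ε`; in particular `liminf_{t→∞} g(t) ≥ ε`. -/
theorem stmt9 (T ε m : ℝ) (hε : 0 < ε) (hm : 0 < m)
    (g g' : ℝ → ℝ)
    (hg : ∀ t ≥ T, HasDerivWithinAt g (g' t) (Set.Ici T) t)
    (hge : ∀ t ≥ T, 0 ≤ g t)
    (hT0 : 0 < g T)
    (hineq : ∀ t ≥ T, g t < ε → m * g t ≤ g' t) :
    (∃ T' ≥ T, ∀ t ≥ T', ε ≤ g t) ∧
    (ε : EReal) ≤ Filter.liminf (fun t => ((g t : ℝ) : EReal)) Filter.atTop := by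
  have hcont : ContinuousOn g (Set.Ici T) := fun t ht => (hg t ht).continuousWithinAt
  have hderivAt : ∀ t > T, HasDerivAt g (g' t) t := fun t ht =>
    (hg t ht.le).hasDerivAt (Ici_mem_nhds ht)
  -- Step 1: g reaches ε at some time s ≥ T.
  have hreach : ∃ s ≥ T, ε ≤ g s := by
    by_contra hcon
    push_neg at hcon
    -- then g' ≥ m g everywhere on [T,∞); exponential growth
    set F : ℝ → ℝ := fun t => g t * Real.exp (-(m * t)) with hF
    have hFd : ∀ t > T, HasDerivAt F ((g' t - m * g t) * Real.exp (-(m * t))) t := by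
      intro t ht
      have h1 : HasDerivAt (fun t => Real.exp (-(m * t))) (-m * Real.exp (-(m * t))) t := by
        have : HasDerivAt (fun t : ℝ => -(m * t)) (-m) t := by
          simpa using ((hasDerivAt_id t).const_mul m).fun_neg
        simpa [mul_comm] using this.exp
      have := (hderivAt t ht).fun_mul h1
      refine this.congr_deriv ?_
      ring
    have hFc : ContinuousOn F (Set.Ici T) :=
      hcont.mul ((Real.continuous_exp.comp ((continuous_const.mul continuous_id).neg)).continuousOn)
    have hmono : MonotoneOn F (Set.Ici T) := by
      apply monotoneOn_of_deriv_nonneg (convex_Ici T) hFc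
      · intro t ht
        rw [interior_Ici] at ht
        exact (hFd t ht).differentiableAt.differentiableWithinAt
      · intro t ht
        rw [interior_Ici] at ht
        rw [(hFd t ht).deriv]
        have h1 : m * g t ≤ g' t := hineq t ht.le (hcon t ht.le)
        have h2 : (0:ℝ) ≤ Real.exp (-(m * t)) := (Real.exp_pos _).le
        nlinarith
    -- pick a large time
    set t₀ : ℝ := max T (T + Real.log (ε / g T) / m) with ht₀
    have hTt₀ : T ≤ t₀ := le_max_left _ _
    have hle : F T ≤ F t₀ := hmono (self_mem_Ici) hTt₀ hTt₀
    have hlog : Real.log (ε / g T) ≤ m * (t₀ - T) := by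
      have hdiv : Real.log (ε / g T) / m ≤ t₀ - T := by
        have := le_max_right T (T + Real.log (ε / g T) / m)
        rw [ht₀]; linarith [this]
      rw [← div_le_iff₀' hm]
      exact hdiv
    have hεgT : ε / g T ≤ Real.exp (m * (t₀ - T)) := by
      calc ε / g T = Real.exp (Real.log (ε / g T)) :=
            (Real.exp_log (div_pos hε hT0)).symm
        _ ≤ Real.exp (m * (t₀ - T)) := Real.exp_le_exp.2 hlog
    have hg0 : ε ≤ g t₀ := by
      have hexp : Real.exp (-(m * T)) = Real.exp (m * (t₀ - T)) * Real.exp (-(m * t₀)) := by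
        rw [← Real.exp_add]; ring_nf
      have hle' : g T * (Real.exp (m * (t₀ - T)) * Real.exp (-(m * t₀))) ≤
          g t₀ * Real.exp (-(m * t₀)) := by
        simpa [hF, hexp] using hle
      have h2 : (0:ℝ) < Real.exp (-(m * t₀)) := Real.exp_pos _
      have h3 : g T * Real.exp (m * (t₀ - T)) ≤ g t₀ :=
        le_of_mul_le_mul_right (by nlinarith) h2
      have h4 : ε ≤ g T * Real.exp (m * (t₀ - T)) := by
        rw [div_le_iff₀ hT0] at hεgT
        nlinarith
      linarith
    exact absurd hg0 (not_le.2 (hcon t₀ hTt₀))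
  obtain ⟨s, hTs, hgs⟩ := hreach
  -- Step 2: once ≥ ε, stays ≥ ε.
  have hstay : ∀ t ≥ s, ε ≤ g t := by
    intro t hst
    by_contra hgt
    push_neg at hgt
    have hst' : s < t := lt_of_le_of_ne hst (by rintro rfl; exact absurd hgs (not_le.2 hgt))
    set S : Set ℝ := Set.Icc s t ∩ g ⁻¹' Set.Ici ε with hS
    have hScl : IsClosed S := by
      apply (hcont.mono (Icc_subset_Ici_self.trans (Ici_subset_Ici.2 hTs))).preimage_isClosed_of_isClosed
        isClosed_Icc isClosed_Ici
    have hSne : S.Nonempty := ⟨s, ⟨le_refl s, hst⟩, hgs⟩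
    have hSbdd : BddAbove S := ⟨t, fun r hr => hr.1.2⟩
    set u : ℝ := sSup S with hu
    have huS : u ∈ S := hScl.csSup_mem hSne hSbdd
    have hut : u ≤ t := huS.1.2
    have hsu : s ≤ u := huS.1.1
    have hgu : ε ≤ g u := huS.2
    have hut' : u < t := lt_of_le_of_ne hut (by intro h; rw [h] at hgu; exact absurd hgu (not_le.2 hgt))
    have hbelow : ∀ r ∈ Set.Ioc u t, g r < ε := by
      intro r hr
      by_contra h
      push_neg at h
      exact absurd (le_csSup hSbdd (⟨⟨hsu.trans hr.1.le, hr.2⟩, h⟩ : r ∈ S)) (not_le.2 hr.1)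
    have hmono : MonotoneOn g (Set.Icc u t) := by
      apply monotoneOn_of_deriv_nonneg (convex_Icc u t)
        (hcont.mono (Icc_subset_Ici_self.trans (Ici_subset_Ici.2 (hTs.trans hsu))))
      · intro r hr
        rw [interior_Icc] at hr
        exact (hderivAt r (lt_of_le_of_lt (hTs.trans hsu) hr.1)).differentiableAt.differentiableWithinAt
      · intro r hr
        rw [interior_Icc] at hr
        have hTr : T < r := lt_of_le_of_lt (hTs.trans hsu) hr.1
        rw [(hderivAt r hTr).deriv]
        have h1 : m * g r ≤ g' r := hineq r hTr.le (hbelow r ⟨hr.1, hr.2.le⟩)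
        nlinarith [hge r hTr.le]
    have := hmono (left_mem_Icc.2 hut'.le) (right_mem_Icc.2 hut'.le) hut'.le
    linarith
  refine ⟨⟨s, hTs, hstay⟩, ?_⟩
  have hev : ∀ᶠ t in atTop, (ε : EReal) ≤ ((g t : ℝ) : EReal) := by
    filter_upwards [eventually_ge_atTop s] with t ht
    exact_mod_cast hstay t ht
  calc (ε : EReal) = liminf (fun _ : ℝ => (ε : EReal)) atTop := (liminf_const _).symm
    _ ≤ liminf (fun t => ((g t : ℝ) : EReal)) atTop := liminf_le_liminf hev
end

section
/- (Core of the Proposition on permanence.) Let f = (f_1,…,f_n) be continuous on C and let φ : [0,∞) × C → C be a semiflow (φ_0 = id, φ_{t+s} = φ_t ∘ φ_s) such that for each x ∈ C the map t ↦ φ_t x is differentiable with (d/dt)(φ_t x)_i = (φ_t x)_i · f_i(φ_t x) for every i. Suppose there exist a set U ⊆ C, forward invariant under φ and with compact closure Ū in C, and numbers ε_1,…,ε_n > 0 such that: (i) for each i, f_i(x) > 0 for every x ∈ Ū with x_i ≤ ε_i; (ii) for every x ∈ C with all coordinates strictly positive there exists T ≥ 0 with φ_t x ∈ U for all t ≥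 T. Then the system is permanent: there exists ε > 0 such that for every x ∈ C with all coordinates strictly positive, liminf_{t→∞} dist(φ_t x, ∂C) ≥ ε, where ∂C = {x ∈ C : x_i = 0 for some i} and dist is the Euclidean distance from a point to a set. -/
open Set Filter Metric

/-- Monotonicity from a nonnegative derivative within `Ici 0` on an interval `[a,b] ⊆ [0,∞)`. -/
lemma mono_aux {y y' : ℝ → ℝ} {a b : ℝ} (ha : 0 ≤ a)
    (hd : ∀ t ∈ Set.Icc a b, HasDerivWithinAt y (y' t) (Set.Ici 0) t)
    (h0 : ∀ t ∈ Set.Icc a b, 0 ≤ y' t) : MonotoneOn y (Set.Icc a b) := by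
  have hsub : Set.Icc a b ⊆ Set.Ici 0 := fun s hs => le_trans ha hs.1
  apply monotoneOn_of_deriv_nonneg (convex_Icc a b)
  · exact fun t ht => ((hd t ht).continuousWithinAt).mono hsub
  · intro t ht
    rw [interior_Icc] at ht
    have h1 : HasDerivAt y (y' t) t :=
      (hd t (Set.Ioo_subset_Icc_self ht)).hasDerivAt (Ici_mem_nhds (lt_of_le_of_lt ha ht.1))
    exact h1.differentiableAt.differentiableWithinAt
  · intro t ht
    rw [interior_Icc] at ht
    have h1 : HasDerivAt y (y' t) t :=
      (hd t (Set.Ioo_subset_Icc_self ht)).hasDerivAt (Ici_mem_nhds (lt_of_le_of_lt ha ht.1))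
    rw [h1.deriv]
    exact h0 t (Set.Ioo_subset_Icc_self ht)

/-- A single coordinate difference bounds the euclidean distance from below. -/
lemma coord_le_dist {n : ℕ} (a b : EuclideanSpace ℝ (Fin n)) (j : Fin n) :
    |a j - b j| ≤ dist a b := by
  calc |a j - b j| = Real.sqrt (dist (a j) (b j) ^ 2) := by
        rw [Real.sqrt_sq_eq_abs, Real.dist_eq, abs_abs]
    _ ≤ Real.sqrt (∑ i, dist (a i) (b i) ^ 2) :=
        Real.sqrt_le_sqrt (Finset.single_le_sum (f := fun i => dist (a i) (b i) ^ 2)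
          (fun i _ => sq_nonneg _) (Finset.mem_univ j))
    _ = dist a b := (EuclideanSpace.dist_eq a b).symm

lemma exp_deriv_aux (M s : ℝ) :
    HasDerivWithinAt (fun u => Real.exp (M * u)) (Real.exp (M * s) * M) (Set.Ici 0) s := by
  have := ((Real.hasDerivAt_exp (M * s)).comp s ((hasDerivAt_id s).const_mul M))
  simp only [mul_one] at this
  exact this.hasDerivWithinAt



/-- Core of the Proposition on permanence.  Let `φ` be a semiflow on the nonnegative orthant
`C ⊆ ℝⁿ` whose trajectories solve `ẋ_i = x_i f_i(x)` with `f` continuous on `C`.  If there are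
a forward invariant set `U ⊆ C` with compact closure contained in `C` and numbers `ε_i > 0`
such that `f_i > 0` on `{x ∈ closure U : x_i ≤ ε_i}`, and every trajectory starting in the
open orthant eventually stays in `U`, then the system is permanent: there is `e > 0` with
`liminf_{t→∞} dist(φ_t x, ∂C) ≥ e` for every `x` in the open orthant (`dist` the Euclidean
distance from a point to a set, `∂C = {x ∈ C : x_i = 0 for some i}`). -/
theorem stmt10 {n : ℕ} (hn : 0 < n)
    (f : EuclideanSpace ℝ (Fin n) → Fin n → ℝ)
    (hf : ContinuousOn f {x : EuclideanSpace ℝ (Fin n) | ∀ i, 0 ≤ x i})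
    (φ : ℝ → EuclideanSpace ℝ (Fin n) → EuclideanSpace ℝ (Fin n))
    (hφC : ∀ t ≥ (0 : ℝ), ∀ x : EuclideanSpace ℝ (Fin n),
      (∀ i, 0 ≤ x i) → ∀ i, 0 ≤ φ t x i)
    (hφ0 : ∀ x : EuclideanSpace ℝ (Fin n), (∀ i, 0 ≤ x i) → φ 0 x = x)
    (hφsemi : ∀ s ≥ (0 : ℝ), ∀ t ≥ (0 : ℝ), ∀ x : EuclideanSpace ℝ (Fin n),
      (∀ i, 0 ≤ x i) → φ (t + s) x = φ t (φ s x))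
    (hode : ∀ x : EuclideanSpace ℝ (Fin n), (∀ i, 0 ≤ x i) → ∀ i : Fin n, ∀ t ≥ (0 : ℝ),
      HasDerivWithinAt (fun s => φ s x i) (φ t x i * f (φ t x) i) (Set.Ici 0) t)
    (U : Set (EuclideanSpace ℝ (Fin n)))
    (hUC : U ⊆ {x : EuclideanSpace ℝ (Fin n) | ∀ i, 0 ≤ x i})
    (hUinv : ∀ t ≥ (0 : ℝ), ∀ x ∈ U, φ t x ∈ U)
    (hUcomp : IsCompact (closure U))
    (hUcl : closure U ⊆ {x : EuclideanSpace ℝ (Fin n) | ∀ i, 0 ≤ x i})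
    (ε : Fin n → ℝ) (hε : ∀ i, 0 < ε i)
    (hfpos : ∀ i : Fin n, ∀ x ∈ closure U, x i ≤ ε i → 0 < f x i)
    (habs : ∀ x : EuclideanSpace ℝ (Fin n), (∀ i, 0 < x i) →
      ∃ T ≥ (0 : ℝ), ∀ t ≥ T, φ t x ∈ U) :
    ∃ e > (0 : ℝ), ∀ x : EuclideanSpace ℝ (Fin n), (∀ i, 0 < x i) →
      (e : EReal) ≤ Filter.liminf
        (fun t => ((Metric.infDist (φ t x)
          {y : EuclideanSpace ℝ (Fin n) | (∀ i, 0 ≤ y i) ∧ ∃ i, y i = 0} : ℝ) : EReal))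
        Filter.atTop := by
  haveI : Nonempty (Fin n) := ⟨⟨0, hn⟩⟩
  set S : Set (EuclideanSpace ℝ (Fin n)) :=
    {y : EuclideanSpace ℝ (Fin n) | (∀ i, 0 ≤ y i) ∧ ∃ i, y i = 0} with hS
  have hSne : S.Nonempty := ⟨0, fun i => le_refl 0, ⟨⟨0, hn⟩, rfl⟩⟩
  set e : ℝ := Finset.univ.inf' Finset.univ_nonempty ε with he_def
  have he : 0 < e := (Finset.lt_inf'_iff _).mpr fun i _ => hε i
  have he_le : ∀ i, e ≤ ε i := fun i => Finset.inf'_le _ (Finset.mem_univ i)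
  -- uniform lower bound for f on the small-coordinate part of closure U
  have hc : ∀ i : Fin n, ∃ c > (0:ℝ), ∀ z ∈ closure U, z i ≤ ε i → c ≤ f z i := by
    intro i
    set A := closure U ∩ {z : EuclideanSpace ℝ (Fin n) | z i ≤ ε i} with hA_def
    by_cases hA : A.Nonempty
    · have hAcl : IsClosed {z : EuclideanSpace ℝ (Fin n) | z i ≤ ε i} :=
        isClosed_le ((EuclideanSpace.proj i).continuous) continuous_const
      have hAc : IsCompact A := hUcomp.inter_right hAcl
      have hcont : ContinuousOn (fun z => f z i) A :=
        (continuous_apply i).comp_continuousOn (hf.mono fun z hz => hUcl hz.1)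
      obtain ⟨z0, hz0A, hz0min⟩ := hAc.exists_isMinOn hA hcont
      exact ⟨f z0 i, hfpos i z0 hz0A.1 hz0A.2,
        fun z hz hzi => hz0min ⟨hz, hzi⟩⟩
    · exact ⟨1, one_pos, fun z hz hzi => absurd ⟨z, hz, hzi⟩ hA⟩
  choose c hcpos hcmin using hc
  refine ⟨e, he, ?_⟩
  intro x hx
  have hxC : ∀ i, 0 ≤ x i := fun i => (hx i).le
  obtain ⟨T, hT0, hTU⟩ := habs x hx
  have hmemC : ∀ t, 0 ≤ t → ∀ i, 0 ≤ φ t x i := fun t ht => hφC t ht x hxC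
  -- continuity of the trajectory
  have hpathC : ContinuousOn (fun t => φ t x) (Set.Ici (0:ℝ)) := by
    have h1 : ContinuousOn (fun t => (fun i => φ t x i : Fin n → ℝ)) (Set.Ici (0:ℝ)) := by
      apply continuousOn_pi.mpr
      intro i t ht
      exact (hode x hxC i t ht).continuousWithinAt
    exact (PiLp.continuous_toLp 2 (fun _ : Fin n => ℝ)).comp_continuousOn h1
  -- the key per-coordinate statement
  have key : ∀ i : Fin n, ∃ t1, T ≤ t1 ∧ ∀ t ≥ t1, ε i ≤ φ t x i := by
    intro i
    set y : ℝ → ℝ := fun t => φ t x i with hy_def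
    have hy_deriv : ∀ t, 0 ≤ t →
        HasDerivWithinAt y (φ t x i * f (φ t x) i) (Set.Ici 0) t := hode x hxC i
    have hy_nonneg : ∀ t, 0 ≤ t → 0 ≤ y t := fun t ht => hmemC t ht i
    have hy_cont : ContinuousOn y (Set.Ici (0:ℝ)) :=
      fun s hs => (hy_deriv s hs).continuousWithinAt
    -- positivity of y at T
    have hyT : 0 < y T := by
      have hg : ContinuousOn (fun s => f (φ s x) i) (Set.Icc 0 T) := by
        apply (continuous_apply i).comp_continuousOn
        exact hf.comp (hpathC.mono Set.Icc_subset_Ici_self)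
          (fun s hs => hmemC s hs.1)
      obtain ⟨M, hM⟩ := isCompact_Icc.exists_bound_of_continuousOn hg
      have hzd : ∀ s ∈ Set.Icc 0 T, HasDerivWithinAt
          (fun u => y u * Real.exp (M * u))
          (φ s x i * f (φ s x) i * Real.exp (M * s) + y s * (Real.exp (M * s) * M))
          (Set.Ici 0) s :=
        fun s hs => (hy_deriv s hs.1).mul (exp_deriv_aux M s)
      have hmono := mono_aux le_rfl hzd (fun s hs => by
        have h1 : |f (φ s x) i| ≤ M := by
          have := hM s hs; rwa [Real.norm_eq_abs] at this
        have h2 := hy_nonneg s hs.1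
        have h3 := Real.exp_pos (M * s)
        have h4 : -M ≤ f (φ s x) i := (abs_le.mp h1).1
        show 0 ≤ y s * f (φ s x) i * Real.exp (M * s) + y s * (Real.exp (M * s) * M)
        have key2 : 0 ≤ y s * Real.exp (M * s) * (f (φ s x) i + M) :=
          mul_nonneg (mul_nonneg h2 h3.le) (by linarith)
        nlinarith [key2])
      have h5 : y 0 * Real.exp (M * 0) ≤ y T * Real.exp (M * T) :=
        hmono ⟨le_rfl, hT0⟩ ⟨hT0, le_rfl⟩ hT0
      have h6 : y 0 = x i := by show φ 0 x i = x i; rw [hφ0 x hxC]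
      rw [h6, mul_zero, Real.exp_zero, mul_one] at h5
      by_contra hcon
      push_neg at hcon
      nlinarith [Real.exp_pos (M * T), hx i]
    -- there is a time ≥ T where y reaches ε i
    have h1 : ∃ t1, T ≤ t1 ∧ ε i ≤ y t1 := by
      by_contra h
      push_neg at h
      have hlt : ∀ t1, T ≤ t1 → y t1 < ε i := h
      set t := T + (Real.log (ε i / y T) + 1) / c i with ht_def
      have hc0 : (c i : ℝ) ≠ 0 := ne_of_gt (hcpos i)
      have hlog : 0 < Real.log (ε i / y T) := by
        apply Real.log_pos
        rw [lt_div_iff₀ hyT]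
        simpa using hlt T le_rfl
      have htT : T ≤ t := by
        have : 0 ≤ (Real.log (ε i / y T) + 1) / c i :=
          div_nonneg (by linarith) (hcpos i).le
        rw [ht_def]
        linarith
      have hwd : ∀ s ∈ Set.Icc T t, HasDerivWithinAt
          (fun u => y u * Real.exp (-(c i * u)))
          (φ s x i * f (φ s x) i * Real.exp (-(c i * s))
            + y s * (Real.exp (-(c i * s)) * (-(c i))))
          (Set.Ici 0) s := by
        intro s hs
        refine (hy_deriv s (le_trans hT0 hs.1)).mul ?_
        have := exp_deriv_aux (-(c i)) s
        simpa [neg_mul] using this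
      have hmono := mono_aux hT0 hwd (fun s hs => by
        have hsU : φ s x ∈ closure U := subset_closure (hTU s hs.1)
        have hfc : c i ≤ f (φ s x) i := hcmin i _ hsU (hlt s hs.1).le
        have h2 := hy_nonneg s (le_trans hT0 hs.1)
        have h3 := Real.exp_pos (-(c i * s))
        show 0 ≤ y s * f (φ s x) i * Real.exp (-(c i * s))
            + y s * (Real.exp (-(c i * s)) * (-(c i)))
        have key2 : 0 ≤ y s * Real.exp (-(c i * s)) * (f (φ s x) i - c i) :=
          mul_nonneg (mul_nonneg h2 h3.le) (by linarith)
        nlinarith [key2])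
      have h5 : y T * Real.exp (-(c i * T)) ≤ y t * Real.exp (-(c i * t)) :=
        hmono ⟨le_rfl, htT⟩ ⟨htT, le_rfl⟩ htT
      have hct : c i * (t - T) = Real.log (ε i / y T) + 1 := by
        rw [ht_def]
        field_simp
        ring
      have h9 : y T * Real.exp (c i * (t - T)) ≤ y t := by
        have hEt := Real.exp_pos (-(c i * t))
        have hexp_eq : Real.exp (c i * (t - T)) * Real.exp (-(c i * t))
            = Real.exp (-(c i * T)) := by
          rw [← Real.exp_add]; congr 1; ring
        rw [← mul_le_mul_iff_of_pos_right hEt]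
        calc y T * Real.exp (c i * (t - T)) * Real.exp (-(c i * t))
            = y T * Real.exp (-(c i * T)) := by rw [mul_assoc, hexp_eq]
          _ ≤ y t * Real.exp (-(c i * t)) := h5
      rw [hct, Real.exp_add, Real.exp_log (div_pos (hε i) hyT)] at h9
      have h10 : y T * (ε i / y T * Real.exp 1) = ε i * Real.exp 1 := by
        field_simp
      rw [h10] at h9
      have h11 := hlt t htT
      nlinarith [Real.one_le_exp (zero_le_one' ℝ), hε i]
    obtain ⟨t1, ht1T, ht1ε⟩ := h1
    refine ⟨t1, ht1T, fun t ht => ?_⟩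
    by_contra hcon
    push_neg at hcon
    have ht1t : t1 < t := lt_of_le_of_ne ht (fun hEq => by rw [← hEq] at hcon; linarith)
    have ht10 : 0 ≤ t1 := le_trans hT0 ht1T
    -- the last time in [t1, t] where y ≥ ε i
    set Sset : Set ℝ := Set.Icc t1 t ∩ y ⁻¹' Set.Ici (ε i) with hSset_def
    have hScl : IsClosed Sset :=
      (hy_cont.mono (Set.Icc_subset_Ici_self.trans (Set.Ici_subset_Ici.mpr ht10))
        : ContinuousOn y (Set.Icc t1 t)).preimage_isClosed_of_isClosed
        isClosed_Icc isClosed_Ici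
    have hSsub : Sset ⊆ Set.Icc t1 t := Set.inter_subset_left
    have hScomp : IsCompact Sset := isCompact_Icc.of_isClosed_subset hScl hSsub
    have ht1S : t1 ∈ Sset := ⟨Set.left_mem_Icc.mpr ht1t.le, ht1ε⟩
    have hSne' : Sset.Nonempty := ⟨t1, ht1S⟩
    set s0 := sSup Sset with hs0_def
    have hs0S : s0 ∈ Sset := hScomp.sSup_mem hSne'
    have hs0t1 : t1 ≤ s0 := hs0S.1.1
    have hs0t : s0 ≤ t := hs0S.1.2
    have hs0ε : ε i ≤ y s0 := hs0S.2
    have hs0lt : s0 < t := lt_of_le_of_ne hs0t (fun hEq => by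
      rw [hEq] at hs0ε; exact absurd hs0ε (not_le.mpr hcon))
    have hs00 : 0 ≤ s0 := le_trans ht10 hs0t1
    have habove : ∀ u, s0 < u → u ≤ t → y u < ε i := by
      intro u hu hut
      by_contra hcon2
      push_neg at hcon2
      have huS : u ∈ Sset := ⟨⟨le_trans hs0t1 hu.le, hut⟩, hcon2⟩
      have := le_csSup hScomp.bddAbove huS
      linarith
    have hs0eq : y s0 = ε i := by
      refine le_antisymm ?_ hs0ε
      by_contra hgt
      push_neg at hgt
      have hcw : ContinuousWithinAt y (Set.Ioi s0) s0 :=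
        (hy_cont s0 hs00).mono (fun u hu => (lt_of_le_of_lt hs00 hu).le)
      have hev1 : ∀ᶠ u in nhdsWithin s0 (Set.Ioi s0), ε i < y u :=
        hcw.eventually (eventually_gt_nhds hgt)
      have hev2 : ∀ᶠ u in nhdsWithin s0 (Set.Ioi s0), u < t :=
        (eventually_lt_nhds hs0lt).filter_mono nhdsWithin_le_nhds
      obtain ⟨u, ⟨hugt, hult⟩, humem⟩ :=
        ((hev1.and hev2).and eventually_mem_nhdsWithin).exists
      exact absurd (habove u humem hult.le) (not_lt.mpr hugt.le)
    have hwd2 : ∀ u ∈ Set.Icc s0 t,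
        HasDerivWithinAt y (φ u x i * f (φ u x) i) (Set.Ici 0) u :=
      fun u hu => hy_deriv u (le_trans hs00 hu.1)
    have hmono2 := mono_aux hs00 hwd2 (fun u hu => by
      have huT : T ≤ u := le_trans (le_trans ht1T hs0t1) hu.1
      have huU : φ u x ∈ closure U := subset_closure (hTU u huT)
      have hyu : y u ≤ ε i := by
        rcases eq_or_lt_of_le hu.1 with hEq | hlt2
        · rw [← hEq]; exact le_of_eq hs0eq
        · exact (habove u hlt2 hu.2).le
      have hfc := hcmin i _ huU hyu
      have hyn := hmemC u (le_trans hs00 hu.1) i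
      exact mul_nonneg hyn (le_trans (hcpos i).le hfc))
    have hfin : y s0 ≤ y t :=
      hmono2 ⟨le_rfl, hs0lt.le⟩ ⟨hs0lt.le, le_rfl⟩ hs0lt.le
    rw [hs0eq] at hfin
    exact absurd hfin (not_le.mpr hcon)
  -- combine the coordinates
  choose t1 ht1T ht1 using key
  set t2 : ℝ := Finset.univ.sup' Finset.univ_nonempty t1 with ht2_def
  have hbound : ∀ t ≥ t2, e ≤ Metric.infDist (φ t x) S := by
    intro t ht
    by_contra hcon
    push_neg at hcon
    obtain ⟨z, hzS, hdz⟩ := (Metric.infDist_lt_iff hSne).mp hcon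
    obtain ⟨hz0, j, hj⟩ := hzS
    have h1 : ε j ≤ φ t x j :=
      ht1 j t (le_trans (Finset.le_sup' t1 (Finset.mem_univ j)) ht)
    have h2 : |φ t x j - z j| ≤ dist (φ t x) z := coord_le_dist _ _ j
    rw [hj, sub_zero] at h2
    have h3 : φ t x j ≤ |φ t x j| := le_abs_self _
    have h4 := he_le j
    linarith
  have hev : ∀ᶠ t in Filter.atTop, (e : EReal) ≤ ((Metric.infDist (φ t x) S : ℝ) : EReal) :=
    Filter.eventually_atTop.mpr ⟨t2, fun t ht => EReal.coe_le_coe_iff.mpr (hbound t ht)⟩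
  calc (e : EReal) = Filter.liminf (fun _ : ℝ => (e : EReal)) Filter.atTop :=
        (Filter.liminf_const _).symm
    _ ≤ _ := Filter.liminf_le_liminf hev
end

section
/- Let f be C¹ on an open neighborhood of C, let φ : [0,∞) × C → C be a continuous semiflow whose trajectories solve ẋ_i = x_i f_i(x) (so that, in particular, for any solution and any index i, the i-th coordinate vanishes at one time iff it vanishes at all times). Fix I ⊆ {1,…,n} and set C_I := {x ∈ C : x_i = 0 for i ∈ I}. Suppose Γ ⊆ C is compact, satisfies φ_t(Γ) = Γ for all t ≥ 0, and ω(D) is nonempty and contained in Γ for every nonempty bounded D ⊆ C (where ω denotes the omega-limit set with respect to φ). Then Γ_I := Γ ∩ C_I is compact, φ_t(Γ_I) = Γ_I for all t ≥ 0, and for every nonempty bounded D ⊆ C_I the set ω(D) is nonempty and contained in Γ_I. (If (E) is dissipative, so are all its subsystems (E)_I, and the global attractor of (E)_I equals Γ ∩ C_I.) -/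
/-- The omega-limit set of a set `D` under a semiflow `φ`:
`ω(D) = ⋂_{s ≥ 0} closure (⋃_{t ≥ s} φ_t(D))`. -/
def omegaLimitE {n : ℕ} (φ : ℝ → (Fin n → ℝ) → (Fin n → ℝ))
    (D : Set (Fin n → ℝ)) : Set (Fin n → ℝ) :=
  ⋂ s ∈ Set.Ici (0 : ℝ), closure (⋃ t ∈ Set.Ici s, φ t '' D)

/-- Along a trajectory of `ẋ_i = x_i f_i(x)` staying in the nonnegative orthant,
the `i`-th coordinate vanishes at time `T ≥ 0` iff it vanishes at time `0`. -/
lemma coord_zero_iff_aux {n : ℕ} (f : (Fin n → ℝ) → (Fin n → ℝ)) (U : Set (Fin n → ℝ))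
    (hCU : {x : Fin n → ℝ | ∀ k, 0 ≤ x k} ⊆ U)
    (hf : ContinuousOn f U)
    (φ : ℝ → (Fin n → ℝ) → (Fin n → ℝ))
    (hφcont : ContinuousOn (fun p : ℝ × (Fin n → ℝ) => φ p.1 p.2)
      (Set.Ici 0 ×ˢ {x : Fin n → ℝ | ∀ k, 0 ≤ x k}))
    (hφC : ∀ t ≥ (0 : ℝ), ∀ x : Fin n → ℝ, (∀ k, 0 ≤ x k) → ∀ k, 0 ≤ φ t x k)
    (hφ0 : ∀ x : Fin n → ℝ, (∀ k, 0 ≤ x k) → φ 0 x = x)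
    (hode : ∀ x : Fin n → ℝ, (∀ k, 0 ≤ x k) → ∀ i : Fin n, ∀ t ≥ (0 : ℝ),
      HasDerivWithinAt (fun s => φ s x i) (φ t x i * f (φ t x) i) (Set.Ici 0) t)
    (x : Fin n → ℝ) (hx : ∀ k, 0 ≤ x k) (i : Fin n) (T : ℝ) (hT : 0 ≤ T) :
    φ T x i = 0 ↔ x i = 0 := by
  set y : ℝ → ℝ := fun s => φ s x i with hy_def
  set g : ℝ → ℝ := fun s => f (φ s x) i with hg_def
  have hy0 : y 0 = x i := by
    simp only [hy_def]
    rw [hφ0 x hx]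
  have htraj : ContinuousOn (fun s : ℝ => φ s x) (Set.Icc 0 T) := by
    have hpair : ContinuousOn (fun s : ℝ => ((s, x) : ℝ × (Fin n → ℝ))) (Set.Icc 0 T) :=
      (continuous_id.prodMk continuous_const).continuousOn
    exact hφcont.comp hpair (fun s hs => ⟨hs.1, hx⟩)
  have hycont : ContinuousOn y (Set.Icc 0 T) :=
    (continuous_apply i).comp_continuousOn htraj
  have hgcont : ContinuousOn g (Set.Icc 0 T) := by
    refine (continuous_apply i).comp_continuousOn (hf.comp htraj ?_)
    exact fun s hs => hCU (fun k => hφC s hs.1 x hx k)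
  obtain ⟨K, hK⟩ := isCompact_Icc.exists_bound_of_continuousOn hgcont
  have hgK : ∀ s ∈ Set.Icc (0 : ℝ) T, g s ≤ K ∧ -K ≤ g s := by
    intro s hs
    have := hK s hs
    rw [Real.norm_eq_abs, abs_le] at this
    exact ⟨this.2, this.1⟩
  have hyderiv : ∀ s ∈ Set.Ico (0 : ℝ) T,
      HasDerivWithinAt y (y s * g s) (Set.Ici s) s := fun s hs =>
    (hode x hx i s hs.1).mono (Set.Ici_subset_Ici.mpr hs.1)
  have hynn : ∀ s ∈ Set.Icc (0 : ℝ) T, 0 ≤ y s := fun s hs => hφC s hs.1 x hx i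
  constructor
  · -- backward: φ T x i = 0 → x i = 0
    intro hzT
    -- consider -(y s * exp (K s)), which is nonincreasing
    have key : ∀ ⦃s⦄, s ∈ Set.Icc (0 : ℝ) T →
        -(y s * Real.exp (K * s)) ≤ -(y 0 * Real.exp (K * 0)) := by
      refine image_le_of_deriv_right_le_deriv_boundary
        (f := fun s => -(y s * Real.exp (K * s)))
        (f' := fun s => -((y s * g s) * Real.exp (K * s) + y s * (Real.exp (K * s) * K)))
        (B := fun _ => -(y 0 * Real.exp (K * 0))) (B' := fun _ => 0)
        ?_ ?_ le_rfl continuousOn_const (fun s _ => (hasDerivWithinAt_const _ _ _)) ?_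
      · exact (hycont.mul (Real.continuous_exp.comp (continuous_const.mul continuous_id)).continuousOn).neg
      · intro s hs
        have he : HasDerivAt (fun s : ℝ => Real.exp (K * s)) (Real.exp (K * s) * K) s := by
          simpa using ((hasDerivAt_id s).const_mul K).exp
        exact ((hyderiv s hs).mul he.hasDerivWithinAt).neg
      · intro s hs
        have h1 : 0 ≤ y s := hynn s ⟨hs.1, hs.2.le⟩
        have h2 : -K ≤ g s := (hgK s ⟨hs.1, hs.2.le⟩).2
        have h3 : (0 : ℝ) < Real.exp (K * s) := Real.exp_pos _
        show -(y s * g s * Real.exp (K * s) + y s * (Real.exp (K * s) * K)) ≤ 0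
        nlinarith [mul_le_mul_of_nonneg_left h2 (mul_nonneg h1 h3.le)]
    have hTT := key (Set.right_mem_Icc.mpr hT)
    simp only [mul_zero, Real.exp_zero, mul_one, hy0, neg_le_neg_iff] at hTT
    have : x i ≤ y T * Real.exp (K * T) := by
      have h := hTT
      nlinarith [h]
    have hyT : y T = 0 := hzT
    rw [hyT, zero_mul] at this
    exact le_antisymm this (hx i)
  · -- forward: x i = 0 → φ T x i = 0
    intro hx0
    have key : ∀ ⦃s⦄, s ∈ Set.Icc (0 : ℝ) T →
        y s * Real.exp (-K * s) ≤ 0 := by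
      refine image_le_of_deriv_right_le_deriv_boundary
        (f := fun s => y s * Real.exp (-K * s))
        (f' := fun s => (y s * g s) * Real.exp (-K * s) + y s * (Real.exp (-K * s) * (-K)))
        (B := fun _ => 0) (B' := fun _ => 0)
        ?_ ?_ ?_ continuousOn_const (fun s _ => (hasDerivWithinAt_const _ _ _)) ?_
      · exact hycont.mul (Real.continuous_exp.comp (continuous_const.mul continuous_id)).continuousOn
      · intro s hs
        have he : HasDerivAt (fun s : ℝ => Real.exp (-K * s)) (Real.exp (-K * s) * (-K)) s := by
          simpa using ((hasDerivAt_id s).const_mul (-K)).exp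
        exact (hyderiv s hs).mul he.hasDerivWithinAt
      · show y 0 * Real.exp (-K * 0) ≤ 0
        rw [mul_zero, Real.exp_zero, hy0, hx0, zero_mul]
      · intro s hs
        have h1 : 0 ≤ y s := hynn s ⟨hs.1, hs.2.le⟩
        have h2 : g s ≤ K := (hgK s ⟨hs.1, hs.2.le⟩).1
        have h3 : (0 : ℝ) < Real.exp (-K * s) := Real.exp_pos _
        show y s * g s * Real.exp (-K * s) + y s * (Real.exp (-K * s) * -K) ≤ 0
        nlinarith [mul_le_mul_of_nonneg_left h2 (mul_nonneg h1 h3.le)]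
    have hTT := key (Set.right_mem_Icc.mpr hT)
    have h3 : (0 : ℝ) < Real.exp (-K * T) := Real.exp_pos _
    have h1 : 0 ≤ y T := hynn T (Set.right_mem_Icc.mpr hT)
    nlinarith

/-- If (E) is dissipative, so are all its subsystems (E)_I, and the global attractor of
(E)_I equals `Γ ∩ C_I`: if `φ` is a continuous semiflow on `C` whose trajectories solve
`ẋ_i = x_i f_i(x)` (with `f` `C¹` near `C`), `Γ ⊆ C` is compact, fully invariant
(`φ_t(Γ) = Γ`), and attracts all bounded subsets of `C` (their omega-limit sets are nonempty
and contained in `Γ`), then `Γ_I = Γ ∩ C_I` is compact, satisfies `φ_t(Γ_I) = Γ_I` for all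
`t ≥ 0`, and `ω(D)` is nonempty and contained in `Γ_I` for every nonempty bounded `D ⊆ C_I`. -/
theorem stmt11 {n : ℕ} (f : (Fin n → ℝ) → (Fin n → ℝ)) (U : Set (Fin n → ℝ))
    (hU : IsOpen U) (hCU : {x : Fin n → ℝ | ∀ k, 0 ≤ x k} ⊆ U)
    (hf : ContDiffOn ℝ 1 f U)
    (φ : ℝ → (Fin n → ℝ) → (Fin n → ℝ))
    (hφcont : ContinuousOn (fun p : ℝ × (Fin n → ℝ) => φ p.1 p.2)
      (Set.Ici 0 ×ˢ {x : Fin n → ℝ | ∀ k, 0 ≤ x k}))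
    (hφC : ∀ t ≥ (0 : ℝ), ∀ x : Fin n → ℝ, (∀ k, 0 ≤ x k) → ∀ k, 0 ≤ φ t x k)
    (hφ0 : ∀ x : Fin n → ℝ, (∀ k, 0 ≤ x k) → φ 0 x = x)
    (hφsemi : ∀ s ≥ (0 : ℝ), ∀ t ≥ (0 : ℝ), ∀ x : Fin n → ℝ,
      (∀ k, 0 ≤ x k) → φ (t + s) x = φ t (φ s x))
    (hode : ∀ x : Fin n → ℝ, (∀ k, 0 ≤ x k) → ∀ i : Fin n, ∀ t ≥ (0 : ℝ),
      HasDerivWithinAt (fun s => φ s x i) (φ t x i * f (φ t x) i) (Set.Ici 0) t)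
    (I : Set (Fin n))
    (Γ : Set (Fin n → ℝ)) (hΓC : Γ ⊆ {x : Fin n → ℝ | ∀ k, 0 ≤ x k})
    (hΓcomp : IsCompact Γ)
    (hΓinv : ∀ t ≥ (0 : ℝ), φ t '' Γ = Γ)
    (hattr : ∀ D : Set (Fin n → ℝ), D ⊆ {x : Fin n → ℝ | ∀ k, 0 ≤ x k} →
      D.Nonempty → Bornology.IsBounded D →
      (omegaLimitE φ D).Nonempty ∧ omegaLimitE φ D ⊆ Γ) :
    IsCompact (Γ ∩ {x : Fin n → ℝ | (∀ k, 0 ≤ x k) ∧ ∀ i' ∈ I, x i' = 0}) ∧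
    (∀ t ≥ (0 : ℝ),
      φ t '' (Γ ∩ {x : Fin n → ℝ | (∀ k, 0 ≤ x k) ∧ ∀ i' ∈ I, x i' = 0}) =
        Γ ∩ {x : Fin n → ℝ | (∀ k, 0 ≤ x k) ∧ ∀ i' ∈ I, x i' = 0}) ∧
    (∀ D : Set (Fin n → ℝ),
      D ⊆ {x : Fin n → ℝ | (∀ k, 0 ≤ x k) ∧ ∀ i' ∈ I, x i' = 0} →
      D.Nonempty → Bornology.IsBounded D →
      (omegaLimitE φ D).Nonempty ∧
        omegaLimitE φ D ⊆ Γ ∩ {x : Fin n → ℝ | (∀ k, 0 ≤ x k) ∧ ∀ i' ∈ I, x i' = 0}) := by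
  have zeroiff := coord_zero_iff_aux f U hCU hf.continuousOn φ hφcont hφC hφ0 hode
  -- C_I is closed
  have hclosed : IsClosed {x : Fin n → ℝ | (∀ k, 0 ≤ x k) ∧ ∀ i' ∈ I, x i' = 0} := by
    have h1 : {x : Fin n → ℝ | (∀ k, 0 ≤ x k) ∧ ∀ i' ∈ I, x i' = 0}
        = (⋂ k, {x : Fin n → ℝ | 0 ≤ x k}) ∩ ⋂ i' ∈ I, {x : Fin n → ℝ | x i' = 0} := by
      ext x
      simp [Set.mem_iInter]
    rw [h1]
    exact (isClosed_iInter fun k => isClosed_le continuous_const (continuous_apply k)).inter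
      (isClosed_iInter fun i' => isClosed_iInter fun _ =>
        isClosed_eq (continuous_apply i') continuous_const)
  -- forward invariance of C_I
  have hfwd : ∀ t ≥ (0 : ℝ), ∀ x : Fin n → ℝ,
      x ∈ {x : Fin n → ℝ | (∀ k, 0 ≤ x k) ∧ ∀ i' ∈ I, x i' = 0} →
      φ t x ∈ {x : Fin n → ℝ | (∀ k, 0 ≤ x k) ∧ ∀ i' ∈ I, x i' = 0} := by
    intro t ht x hx
    exact ⟨hφC t ht x hx.1, fun i' hi' => (zeroiff x hx.1 i' t ht).mpr (hx.2 i' hi')⟩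
  refine ⟨hΓcomp.inter_right hclosed, ?_, ?_⟩
  · intro t ht
    apply Set.Subset.antisymm
    · rintro z ⟨y, ⟨hyΓ, hyCI⟩, rfl⟩
      constructor
      · rw [← hΓinv t ht]
        exact Set.mem_image_of_mem _ hyΓ
      · exact hfwd t ht y hyCI
    · rintro z ⟨hzΓ, hzCI⟩
      have : z ∈ φ t '' Γ := by rw [hΓinv t ht]; exact hzΓ
      obtain ⟨y, hyΓ, rfl⟩ := this
      have hyC : ∀ k, 0 ≤ y k := hΓC hyΓ
      refine ⟨y, ⟨hyΓ, hyC, fun i' hi' => ?_⟩, rfl⟩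
      exact (zeroiff y hyC i' t ht).mp (hzCI.2 i' hi')
  · intro D hD hne hbd
    have hDC : D ⊆ {x : Fin n → ℝ | ∀ k, 0 ≤ x k} := fun x hx => (hD hx).1
    obtain ⟨h1, h2⟩ := hattr D hDC hne hbd
    refine ⟨h1, fun z hz => ⟨h2 hz, ?_⟩⟩
    have hz0 : z ∈ closure (⋃ t ∈ Set.Ici (0 : ℝ), φ t '' D) := by
      simp only [omegaLimitE, Set.mem_iInter] at hz
      exact hz 0 (Set.mem_Ici.mpr le_rfl)
    have hsub : (⋃ t ∈ Set.Ici (0 : ℝ), φ t '' D) ⊆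
        {x : Fin n → ℝ | (∀ k, 0 ≤ x k) ∧ ∀ i' ∈ I, x i' = 0} := by
      rintro w hw
      simp only [Set.mem_iUnion, Set.mem_image, Set.mem_Ici] at hw
      obtain ⟨t, ht, x, hx, rfl⟩ := hw
      exact hfwd t ht x (hD hx)
    exact hclosed.closure_subset_iff.mpr hsub hz0
end

section
/- For the May–Leonard system with parameters α, β ∈ ℝ, α ≠ β, let F be the vector field F(x) = (x_1(1 − x_1 − αx_2 − βx_3), x_2(1 − βx_1 − x_2 − αx_3), x_3(1 − αx_1 − βx_2 − x_3)), and let y = (c,c,c) with c = 1/(1+α+β) (assuming 1+α+β ≠ 0) be the interior rest point. Then the eigenvalues of the Jacobian DF(y), viewed over ℂ, are −1 and the complex-conjugate pair μ = −(1 + αω + βω²)/(1+α+β), μ̄ = −(1 + αω² + βω)/(1+α+β), where ω = e^{2πi/3}; each of μ, μ̄ has real part (α + β − 2)/(2(1+α+β)). In particular, if 0 < β < 1 < α and α + β > 2, then DF(y) has one negative real eigenvalue −1 and a pair of complex eigenvalues with strictly positive real part. -/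
noncomputable def mayLeonardP (i : Fin 3) : (Fin 3 → ℝ) →L[ℝ] ℝ := ContinuousLinearMap.proj i

lemma mayLeonard_entry (a b : ℝ) (i j k : Fin 3) (x : Fin 3 → ℝ) :
    fderiv ℝ (fun y : Fin 3 → ℝ => y i * (1 - y i - a * y j - b * y k)) x
    = (1 - x i - a * x j - b * x k) • mayLeonardP i
      + x i • (-(mayLeonardP i) - a • mayLeonardP j - b • mayLeonardP k) := by
  have hi : HasFDerivAt (fun y : Fin 3 → ℝ => y i) (mayLeonardP i) x :=
    (mayLeonardP i).hasFDerivAt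
  have hj : HasFDerivAt (fun y : Fin 3 → ℝ => y j) (mayLeonardP j) x :=
    (mayLeonardP j).hasFDerivAt
  have hk : HasFDerivAt (fun y : Fin 3 → ℝ => y k) (mayLeonardP k) x :=
    (mayLeonardP k).hasFDerivAt
  have hg : HasFDerivAt (fun y : Fin 3 → ℝ => 1 - y i - a * y j - b * y k)
      (-(mayLeonardP i) - a • mayLeonardP j - b • mayLeonardP k) x := by
    have := (((hasFDerivAt_const (1:ℝ) x).sub hi).sub (hj.const_mul a)).sub (hk.const_mul b)
    simp only [zero_sub] at this; exact this
  rw [show fderiv ℝ (fun y : Fin 3 → ℝ => y i * (1 - y i - a * y j - b * y k)) x = _ from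
    (hi.mul hg).fderiv]; abel

lemma mayLeonard_entry' (a b : ℝ) (i j k l : Fin 3) (x : Fin 3 → ℝ) :
    fderiv ℝ (fun y : Fin 3 → ℝ => y i * (1 - y i - a * y j - b * y k)) x
      ((Pi.single l (1:ℝ) : Fin 3 → ℝ))
    = (1 - x i - a * x j - b * x k) * ((Pi.single l (1:ℝ) : Fin 3 → ℝ) i)
      + x i * (-((Pi.single l (1:ℝ) : Fin 3 → ℝ) i) - a * ((Pi.single l (1:ℝ) : Fin 3 → ℝ) j)
          - b * ((Pi.single l (1:ℝ) : Fin 3 → ℝ) k)) := by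
  rw [mayLeonard_entry]
  simp [mayLeonardP, smul_eq_mul]

open Polynomial in
/-- At the interior rest point `y = (c,c,c)`, `c = 1/(1+α+β)`, of the May–Leonard system
(with `α ≠ β` and `1 + α + β ≠ 0`), the eigenvalues of the Jacobian `DF(y)`, viewed over `ℂ`,
are `-1` and the complex-conjugate pair `μ = -(1 + αω + βω²)/(1+α+β)`,
`μ̄ = -(1 + αω² + βω)/(1+α+β)` with `ω = e^{2πi/3}`; each of `μ, μ̄` has real part
`(α + β - 2)/(2(1+α+β))`.  In particular, if `0 < β < 1 < α` and `α + β > 2`, then `DF(y)`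
has the negative real eigenvalue `-1` and a pair of genuinely complex eigenvalues with
strictly positive real part. -/
theorem stmt14 (α β : ℝ) (hαβ : α ≠ β) (hs : 1 + α + β ≠ 0)
    (c : ℝ) (hc : c = 1 / (1 + α + β))
    (F : (Fin 3 → ℝ) → (Fin 3 → ℝ))
    (hF : F = fun x => ![x 0 * (1 - x 0 - α * x 1 - β * x 2),
                         x 1 * (1 - β * x 0 - x 1 - α * x 2),
                         x 2 * (1 - α * x 0 - β * x 1 - x 2)])
    (DF : Matrix (Fin 3) (Fin 3) ℝ)
    (hDF : DF = Matrix.of fun i j =>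
      fderiv ℝ (fun y => F y i) ![c, c, c] (Pi.single j 1))
    (ω μ : ℂ)
    (hω : ω = Complex.exp (2 * Real.pi * Complex.I / 3))
    (hμ : μ = -(1 + α * ω + β * ω ^ 2) / (1 + α + β)) :
    (DF.map (fun r => (r : ℂ))).charpoly =
      (Polynomial.X + 1) * (Polynomial.X - Polynomial.C μ) *
        (Polynomial.X - Polynomial.C (starRingEnd ℂ μ)) ∧
    starRingEnd ℂ μ = -(1 + α * ω ^ 2 + β * ω) / (1 + α + β) ∧
    μ.re = (α + β - 2) / (2 * (1 + α + β)) ∧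
    ((0 < β ∧ β < 1 ∧ 1 < α ∧ 2 < α + β) → 0 < μ.re ∧ μ.im ≠ 0) := by
  have hcs : c * (1 + α + β) = 1 := by rw [hc]; field_simp
  -- Step 1: the Jacobian at the interior rest point
  have hDF' : DF = Matrix.of ![![-c, -(c*α), -(c*β)], ![-(c*β), -c, -(c*α)],
      ![-(c*α), -(c*β), -c]] := by
    rw [hDF, hF]
    have h1 : (fun y : Fin 3 → ℝ => y 1 * (1 - β * y 0 - y 1 - α * y 2))
        = fun y : Fin 3 → ℝ => y 1 * (1 - y 1 - β * y 0 - α * y 2) := by funext y; ring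
    have h2 : (fun y : Fin 3 → ℝ => y 2 * (1 - α * y 0 - β * y 1 - y 2))
        = fun y : Fin 3 → ℝ => y 2 * (1 - y 2 - α * y 0 - β * y 1) := by funext y; ring
    have f2 : (⟨2, by omega⟩ : Fin 3) = 2 := rfl
    ext i j
    fin_cases i <;> fin_cases j <;>
      simp only [Matrix.of_apply, Matrix.cons_val', Matrix.cons_val_zero, Matrix.cons_val_one,
        Matrix.head_cons, Matrix.cons_val_two, Matrix.tail_cons, Matrix.empty_val',
        Matrix.cons_val_fin_one, Matrix.head_fin_const, Fin.isValue, Fin.zero_eta, Fin.mk_one,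
        f2] <;>
      (try rw [h1]) <;> (try rw [h2]) <;>
      (first
        | rw [mayLeonard_entry' α β 0 1 2]
        | rw [mayLeonard_entry' β α 1 0 2]
        | rw [mayLeonard_entry' α β 2 0 1]) <;>
      simp [Pi.single_apply] <;>
      (try ring) <;> (try linear_combination -hcs)
  -- Step 2: facts about ω
  have hθ : (2 * (Real.pi:ℂ) * Complex.I / 3) = ((2 * Real.pi / 3 : ℝ) : ℂ) * Complex.I := by
    push_cast; ring
  have hω3 : ω ^ 3 = 1 := by
    rw [hω, ← Complex.exp_nat_mul]
    norm_num
    rw [show (3:ℂ) * (2 * (Real.pi:ℂ) * Complex.I / 3) = 2 * (Real.pi:ℂ) * Complex.I by ring]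
    exact Complex.exp_two_pi_mul_I
  have hmc : (starRingEnd ℂ) ω * ω = 1 := by
    rw [hω, ← Complex.exp_conj, ← Complex.exp_add]
    rw [show (starRingEnd ℂ) (2 * (Real.pi:ℂ) * Complex.I / 3)
        + 2 * (Real.pi:ℂ) * Complex.I / 3 = 0 by
      simp [map_div₀, map_ofNat, Complex.conj_I, Complex.conj_ofReal]; ring]
    exact Complex.exp_zero
  have hconj : (starRingEnd ℂ) ω = ω ^ 2 := by
    calc (starRingEnd ℂ) ω = (starRingEnd ℂ) ω * ω ^ 3 := by rw [hω3, mul_one]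
    _ = ((starRingEnd ℂ) ω * ω) * ω ^ 2 := by ring
    _ = ω ^ 2 := by rw [hmc, one_mul]
  have hcos : Real.cos (2 * Real.pi / 3) = -(1/2) := by
    rw [show 2 * Real.pi / 3 = Real.pi - Real.pi/3 by ring, Real.cos_pi_sub,
      Real.cos_pi_div_three]
  have hsin : Real.sin (2 * Real.pi / 3) = Real.sqrt 3 / 2 := by
    rw [show 2 * Real.pi / 3 = Real.pi - Real.pi/3 by ring, Real.sin_pi_sub,
      Real.sin_pi_div_three]
  have hre : ω.re = -(1/2) := by
    rw [hω, hθ, Complex.exp_mul_I, ← Complex.ofReal_cos, ← Complex.ofReal_sin, hcos, hsin]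
    simp
  have him : ω.im = Real.sqrt 3 / 2 := by
    rw [hω, hθ, Complex.exp_mul_I, ← Complex.ofReal_cos, ← Complex.ofReal_sin, hcos, hsin]
    simp
  have hω1 : ω ≠ 1 := by
    intro h
    have h0 : ω.im = 0 := by rw [h]; simp
    rw [him] at h0
    have h3 : Real.sqrt 3 > 0 := Real.sqrt_pos.mpr (by norm_num)
    linarith
  have hsum : ω ^ 2 + ω + 1 = 0 := by
    have hz : (ω - 1) * (ω ^ 2 + ω + 1) = 0 := by linear_combination hω3
    rcases mul_eq_zero.mp hz with h | h
    · exact absurd (sub_eq_zero.mp h) hω1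
    · exact h
  -- Step 3: facts about μ
  have hsC : (1:ℂ) + ↑α + ↑β ≠ 0 := by
    rw [show (1:ℂ) + ↑α + ↑β = ((1 + α + β : ℝ) : ℂ) by push_cast; ring]
    exact Complex.ofReal_ne_zero.mpr hs
  have hcC : (↑c:ℂ) * (1 + ↑α + ↑β) = 1 := by
    rw [hc]; push_cast; field_simp
  have hμe : μ = -↑c * (1 + ↑α * ω + ↑β * ω ^ 2) := by
    rw [hμ, hc]; push_cast; field_simp
  have hcjμ : (starRingEnd ℂ) μ = -↑c * (1 + ↑α * ω ^ 2 + ↑β * ω) := by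
    rw [hμe]
    simp only [map_mul, map_add, map_neg, map_pow, map_one, Complex.conj_ofReal, hconj]
    linear_combination (-(↑c * ↑β * ω)) * hω3
  have hconjstmt : (starRingEnd ℂ) μ = -(1 + ↑α * ω ^ 2 + ↑β * ω) / (1 + ↑α + ↑β) := by
    rw [hcjμ, eq_div_iff hsC]
    linear_combination (-(1 + ↑α * ω ^ 2 + ↑β * ω)) * hcC
  have h2ω : ω ^ 2 = -1 - ω := by linear_combination hsum
  have hμre : μ.re = (α + β - 2) / (2 * (1 + α + β)) := by
    rw [hμe, h2ω]
    simp [Complex.mul_re, Complex.add_re, Complex.sub_re, Complex.neg_re, Complex.one_re,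
      Complex.ofReal_re, Complex.ofReal_im, Complex.mul_im, Complex.add_im, Complex.sub_im,
      Complex.neg_im, Complex.one_im, hre, him]
    rw [hc]; field_simp; ring
  have hμim : μ.im = c * ((β - α) * (Real.sqrt 3 / 2)) := by
    rw [hμe, h2ω]
    simp [Complex.mul_re, Complex.add_re, Complex.sub_re, Complex.neg_re, Complex.one_re,
      Complex.ofReal_re, Complex.ofReal_im, Complex.mul_im, Complex.add_im, Complex.sub_im,
      Complex.neg_im, Complex.one_im, hre, him]
    ring
  -- Step 4: coefficient identities
  have eA : (3*(c:ℂ)) = 1 - (μ + (starRingEnd ℂ) μ) := by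
    rw [hcjμ, hμe]
    linear_combination hcC - (↑c * (↑α + ↑β)) * hsum
  have eB : 3*(c:ℂ)^2 - 3*((c:ℂ)*↑α)*((c:ℂ)*↑β)
      = μ * (starRingEnd ℂ) μ - (μ + (starRingEnd ℂ) μ) := by
    rw [hcjμ, hμe]
    linear_combination ((c:ℂ) * (2 - ↑α - ↑β)) * hcC
      + (-((c:ℂ)^2 * ((↑α^2 + ↑β^2) * (ω - 1) + (↑α + ↑β) + ↑α * ↑β * (1 + ω^2 - ω)))
         - (c:ℂ) * (↑α + ↑β)) * hsum
  have eC : (c:ℂ)^3 * (1 + (α:ℂ)^3 + (β:ℂ)^3 - 3*↑α*↑β) = μ * (starRingEnd ℂ) μ := by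
    rw [hcjμ, hμe]
    linear_combination ((c:ℂ)^2 * (1 + ↑α^2 + ↑β^2 - ↑α - ↑β - ↑α * ↑β)) * hcC
      + (-((c:ℂ)^2 * ((↑α^2 + ↑β^2) * (ω - 1) + (↑α + ↑β) + ↑α * ↑β * (1 + ω^2 - ω)))) * hsum
  -- Step 5: the characteristic polynomial
  have key : ((Matrix.of ![![-c, -(c*α), -(c*β)], ![-(c*β), -c, -(c*α)],
        ![-(c*α), -(c*β), -c]]).map (fun r => (r:ℂ))).charpoly
      = X^3 + C (3*(c:ℂ)) * X^2 + C (3*(c:ℂ)^2 - 3*((c:ℂ)*↑α)*((c:ℂ)*↑β)) * X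
        + C ((c:ℂ)^3 * (1 + (α:ℂ)^3 + (β:ℂ)^3 - 3*↑α*↑β)) := by
    rw [show ∀ M : Matrix (Fin 3) (Fin 3) ℂ, M.charpoly = (Matrix.charmatrix M).det
        from fun _ => rfl, Matrix.det_fin_three]
    simp [Matrix.charmatrix_apply, Matrix.diagonal_apply, Matrix.map_apply, Complex.ofReal_neg,
      Complex.ofReal_mul, map_ofNat]
    ring
  have rhsexp : (X + 1) * (X - C μ) * (X - C ((starRingEnd ℂ) μ))
      = X^3 + C (1 - (μ + (starRingEnd ℂ) μ)) * X^2
        + C (μ * (starRingEnd ℂ) μ - (μ + (starRingEnd ℂ) μ)) * X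
        + C (μ * (starRingEnd ℂ) μ) := by
    simp only [map_add, map_sub, map_mul, map_one]
    ring
  refine ⟨?_, hconjstmt, hμre, ?_⟩
  · rw [hDF', key, eA, eB, eC, rhsexp]
  · rintro ⟨hβ0, hβ1, hα1, hαβ2⟩
    have hspos : (0:ℝ) < 1 + α + β := by linarith
    constructor
    · rw [hμre]
      apply div_pos <;> linarith
    · rw [hμim]
      have hcpos : 0 < c := by rw [hc]; positivity
      have hβα : β - α ≠ 0 := sub_ne_zero.mpr (fun h => hαβ h.symm)
      have h3 : (0:ℝ) < Real.sqrt 3 / 2 := by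
        have := Real.sqrt_pos.mpr (show (0:ℝ) < 3 by norm_num); linarith
      exact mul_ne_zero (ne_of_gt hcpos) (mul_ne_zero hβα (ne_of_gt h3))
end
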